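/- arXiv:math/0703045 — 3 statements merged into one kernel-verified Lean document; each statement's English description precedes it below -/
import Mathlib

section
/- Let n < ω and let H be a subgroup of G of bounded index (i.e. (G:H) < κ̄). Suppose ā ∈ ^α𝔠 (α < κ̄) contains representatives of every left H-coset and Rang(ā) ⊇ A*, and Rang(ā) = M ≺ 𝔠. If p(x) ⊇ p*(x) is a 1-type over M with p(𝔠) = H, then q^n_{ā}(x) ⊢ p(x). -/
open FirstOrder Cardinal Set

universe u

namespace Paper886

section Basic

variable (L : FirstOrder.Language.{u, u}) (M : Type u) [L.Structure M]

/-- A first-order formula in `n` object variables together with a finite tuple of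
parameters from `M`. -/
structure ParamFormula (n : ℕ) : Type u where
  m : ℕ
  toFormula : L.Formula (Fin n ⊕ Fin m)
  params : Fin m → M

variable {L M}

/-- Realization of a parametrized formula at a tuple. -/
def ParamFormula.Realize {n : ℕ} (f : ParamFormula L M n) (v : Fin n → M) : Prop :=
  f.toFormula.Realize (Sum.elim v f.params)

/-- The parameters of `f` all lie in `B`. -/
def ParamFormula.paramsIn {n : ℕ} (f : ParamFormula L M n) (B : Set M) : Prop :=
  ∀ i, f.params i ∈ B

/-- The set of realizations of a partial 1-type. -/
def realizeSet (p : Set (ParamFormula L M 1)) : Set M :=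
  {a | ∀ f ∈ p, f.Realize fun _ => a}

/-- The partial type `p` is over the parameter set `B`. -/
def IsTypeOver (p : Set (ParamFormula L M 1)) (B : Set M) : Prop :=
  ∀ f ∈ p, f.paramsIn B

variable (L) in
/-- Two tuples realize the same type over a set `A` of parameters. -/
def SameType {α : Type u} (A : Set M) (a b : α → M) : Prop :=
  ∀ (n mp : ℕ) (φ : L.Formula (Fin n ⊕ Fin mp)) (vs : Fin n → α) (ps : Fin mp → M),
    (∀ i, ps i ∈ A) →
      (φ.Realize (Sum.elim (fun i => a (vs i)) ps) ↔ φ.Realize (Sum.elim (fun i => b (vs i)) ps))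

variable (L M)

/-- `M` is `κ`-saturated: every finitely satisfiable 1-type over fewer than `κ`
parameters is realized in `M`. -/
def Saturated (κ : Cardinal.{u}) : Prop :=
  ∀ B : Set M, #B < κ → ∀ p : Set (ParamFormula L M 1), IsTypeOver p B →
    (∀ s : Set (ParamFormula L M 1), s ⊆ p → s.Finite → ∃ a : M, ∀ f ∈ s, f.Realize fun _ => a) →
    ∃ a : M, a ∈ realizeSet p

/-- `Th(M)` is dependent (NIP): no formula has the independence property, where consistency
of a pattern is rendered as finite satisfiability in the (saturated) monster. -/
def IsDependent : Prop :=
  ∀ (nx np : ℕ) (φ : L.Formula (Fin nx ⊕ Fin np)) (a : ℕ → Fin np → M),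
    ¬ ∀ (u : Set ℕ) (s : Finset ℕ), ∃ x : Fin nx → M,
        ∀ i ∈ s, (φ.Realize (Sum.elim x (a i)) ↔ i ∈ u)

variable {L M}

/-- The cardinality `|T|` of the (complete) theory of `M`. -/
noncomputable def theoryCard (L : FirstOrder.Language.{u, u}) : Cardinal.{u} :=
  ℵ₀ ⊔ L.card

variable (L M)

/-- A type-definable group: a partial type `p*` over `A*` together with definitions
(over `A*`) of the group operations making `p*(𝔠)` a group. -/
structure DefGroup : Type u where
  AStar : Set M
  pStar : Set (ParamFormula L M 1)
  pStar_over : IsTypeOver pStar AStar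
  mul : M → M → M
  inv : M → M
  one : M
  mul_definable : ∃ φ : ParamFormula L M 3, φ.paramsIn AStar ∧
    ∀ x y z : M, (φ.Realize ![x, y, z] ↔ mul x y = z)
  inv_definable : ∃ φ : ParamFormula L M 2, φ.paramsIn AStar ∧
    ∀ x y : M, (φ.Realize ![x, y] ↔ inv x = y)
  one_definable : ∃ φ : ParamFormula L M 1, φ.paramsIn AStar ∧
    ∀ x : M, (φ.Realize ![x] ↔ x = one)
  one_mem' : one ∈ realizeSet pStar
  mul_mem' : ∀ x ∈ realizeSet pStar, ∀ y ∈ realizeSet pStar, mul x y ∈ realizeSet pStar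
  inv_mem' : ∀ x ∈ realizeSet pStar, inv x ∈ realizeSet pStar
  mul_assoc' : ∀ x ∈ realizeSet pStar, ∀ y ∈ realizeSet pStar, ∀ z ∈ realizeSet pStar,
    mul (mul x y) z = mul x (mul y z)
  one_mul' : ∀ x ∈ realizeSet pStar, mul one x = x
  mul_one' : ∀ x ∈ realizeSet pStar, mul x one = x
  inv_mul' : ∀ x ∈ realizeSet pStar, mul (inv x) x = one
  mul_inv' : ∀ x ∈ realizeSet pStar, mul x (inv x) = one

variable {L M}

namespace DefGroup

variable (D : DefGroup L M)

/-- The underlying set of the group `G = p*(𝔠)`. -/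
def carrier : Set M := realizeSet D.pStar

/-- `G` is abelian. -/
def IsAbelian : Prop := ∀ x ∈ D.carrier, ∀ y ∈ D.carrier, D.mul x y = D.mul y x

/-- `H` is a subgroup of `G`. -/
def IsSubgroup (H : Set M) : Prop :=
  H ⊆ D.carrier ∧ D.one ∈ H ∧ (∀ x ∈ H, ∀ y ∈ H, D.mul x y ∈ H) ∧ ∀ x ∈ H, D.inv x ∈ H

/-- `(G : H) ≤ c`: at most `c` left cosets of `H` cover `G`. -/
def indexLE (H : Set M) (c : Cardinal.{u}) : Prop :=
  ∃ S : Set M, S ⊆ D.carrier ∧ #S ≤ c ∧ ∀ g ∈ D.carrier, ∃ s ∈ S, D.mul (D.inv s) g ∈ H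

/-- `(G : H) < c`: fewer than `c` left cosets of `H` cover `G`. -/
def indexLT (H : Set M) (c : Cardinal.{u}) : Prop :=
  ∃ S : Set M, S ⊆ D.carrier ∧ #S < c ∧ ∀ g ∈ D.carrier, ∃ s ∈ S, D.mul (D.inv s) g ∈ H

/-- The realization set of the partial type `q^n_Γ`. -/
def qSet (Γ : Set (ParamFormula L M 1)) (n : ℕ) : Set M :=
  {c | ∃ d : Fin n → M × M,
    (∀ ℓ, (d ℓ).1 ∈ D.carrier ∧ (d ℓ).2 ∈ D.carrier) ∧
    (∀ ℓ, ∀ f ∈ Γ, (f.Realize fun _ => (d ℓ).1) ↔ (f.Realize fun _ => (d ℓ).2)) ∧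
    c = (List.ofFn fun ℓ => D.mul (D.inv (d ℓ).1) (d ℓ).2).foldr D.mul D.one}

/-- The realization set of `q^n_{ā}`, i.e. `q^n_{Γ_ā}` where `Γ_ā` consists of all
formulas with parameters in the range of `ā`. -/
def qTupleSet {α : Type u} (a : α → M) (n : ℕ) : Set M :=
  D.qSet {f : ParamFormula L M 1 | f.paramsIn (Set.range a)} n

end DefGroup

end Basic

variable {L : FirstOrder.Language.{u, u}} {M : Type u} [L.Structure M]

variable (L) in
/-- `X` is the union of fewer than `κ` realization sets of types over `B`. -/
def UnionTypeDefOver (X B : Set M) (κ : Cardinal.{u}) : Prop :=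
  ∃ ι : Type u, #ι < κ ∧ ∃ P : ι → Set (ParamFormula L M 1),
    (∀ i, IsTypeOver (P i) B) ∧ X = ⋃ i, realizeSet (P i)

variable (L) in
/-- `X` is union-type-definable (with fewer than `κ` parameters altogether). -/
def UnionTypeDefinable (X : Set M) (κ : Cardinal.{u}) : Prop :=
  ∃ B : Set M, #B < κ ∧ UnionTypeDefOver L X B κ

/-- `G_q = (p* ∪ q)(𝔠)`. -/
def Gq (D : DefGroup L M) (q : Set (ParamFormula L M 1)) : Set M :=
  realizeSet (D.pStar ∪ q)

/-- `R_B`: the family of 1-types `q` over `B` such that `G_q` is a subgroup of `G`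
of index `< κ`. -/
def RB (D : DefGroup L M) (κ : Cardinal.{u}) (B : Set M) : Set (Set (ParamFormula L M 1)) :=
  {q | IsTypeOver q B ∧ D.IsSubgroup (Gq D q) ∧ D.indexLT (Gq D q) κ}

/-- `q_B`, the union of all members of `R_B`. -/
def qB (D : DefGroup L M) (κ : Cardinal.{u}) (B : Set M) : Set (ParamFormula L M 1) :=
  ⋃₀ RB D κ B

/-- `G_B = q_B(𝔠) ∩ G`. -/
def GB (D : DefGroup L M) (κ : Cardinal.{u}) (B : Set M) : Set M :=
  realizeSet (qB D κ B) ∩ D.carrier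

/-- The complete type of `a` over `A` (as the set of all param-formulas over `A`
satisfied by `a`). -/
def typeOf (A : Set M) (a : M) : Set (ParamFormula L M 1) :=
  {f | f.paramsIn A ∧ f.Realize fun _ => a}

/-- `φ(x̄, ȳ₀, …, ȳ_{k-1})` is `k`-independent: for every index set of size `< κ` there is
an array of parameter tuples such that every pattern on `^k ι` is (finitely) satisfiable. -/
def FormulaKIndep (M : Type u) [L.Structure M] (κ : Cardinal.{u}) (k nx : ℕ) (ny : Fin k → ℕ)
    (φ : L.Formula (Fin nx ⊕ ((ℓ : Fin k) × Fin (ny ℓ)))) : Prop :=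
  ∀ ι : Type u, #ι < κ →
    ∃ a : (ℓ : Fin k) → ι → Fin (ny ℓ) → M,
      ∀ (u : Set (Fin k → ι)) (s : Finset (Fin k → ι)),
        ∃ x : Fin nx → M,
          ∀ η ∈ s, ((φ.Realize (Sum.elim x fun p => a p.1 (η p.1) p.2)) ↔ η ∈ u)

/-- `Th(M)` is `k`-independent. -/
def KIndependent (L : FirstOrder.Language.{u, u}) (M : Type u) [L.Structure M] (κ : Cardinal.{u})
    (k : ℕ) : Prop :=
  ∃ (nx : ℕ) (ny : Fin k → ℕ) (φ : L.Formula (Fin nx ⊕ ((ℓ : Fin k) × Fin (ny ℓ)))),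
    FormulaKIndep M κ k nx ny φ

/-- `Th(M)` is `k`-dependent. -/
def KDependent (L : FirstOrder.Language.{u, u}) (M : Type u) [L.Structure M] (κ : Cardinal.{u})
    (k : ℕ) : Prop :=
  ¬ KIndependent L M κ k


theorem ParamFormula.realize_congr {n : ℕ} (f : ParamFormula L M n) {v : Fin n → M}
    {w : Fin n ⊕ Fin f.m → M} (h : w = Sum.elim v f.params) :
    f.toFormula.Realize w ↔ f.Realize v := by
  subst h; exact Iff.rfl

set_option linter.unnecessarySeqFocus false in
/-- Shift lemma: given definable `inv` and `mul` and a parameter `s`, the condition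
`f(s⁻¹ · x)` is expressible by a parametrized formula. -/
theorem shift_exists (φi : ParamFormula L M 2) (φm : ParamFormula L M 3)
    (inv : M → M) (mul : M → M → M)
    (hφi : ∀ x y : M, (φi.Realize ![x, y] ↔ inv x = y))
    (hφm : ∀ x y z : M, (φm.Realize ![x, y, z] ↔ mul x y = z))
    (f : ParamFormula L M 1) (s : M) :
    ∃ g : ParamFormula L M 1,
      (∀ B : Set M, φi.paramsIn B → φm.paramsIn B → f.paramsIn B → s ∈ B → g.paramsIn B) ∧
      ∀ x : M, (g.Realize (fun _ => x) ↔ f.Realize (fun _ => mul (inv s) x)) := by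
  classical
  let P : Type := Fin 1 ⊕ (Fin φi.m ⊕ (Fin φm.m ⊕ Fin f.m))
  let paramsP : P → M := Sum.elim (fun _ => s) (Sum.elim φi.params (Sum.elim φm.params f.params))
  let V : Type := (Fin 2 ⊕ Fin φi.m) ⊕ ((Fin 3 ⊕ Fin φm.m) ⊕ (Fin 1 ⊕ Fin f.m))
  let χ : L.Formula V :=
    (φi.toFormula.relabel Sum.inl) ⊓
      ((φm.toFormula.relabel (Sum.inr ∘ Sum.inl)) ⊓ (f.toFormula.relabel (Sum.inr ∘ Sum.inr)))
  let fmap : V → (Fin 1 ⊕ P) ⊕ Fin 2 :=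
    Sum.elim
      (Sum.elim ![Sum.inl (Sum.inr (Sum.inl 0)), Sum.inr 0]
        (fun j => Sum.inl (Sum.inr (Sum.inr (Sum.inl j)))))
      (Sum.elim
        (Sum.elim ![Sum.inr 0, Sum.inl (Sum.inl 0), Sum.inr 1]
          (fun j => Sum.inl (Sum.inr (Sum.inr (Sum.inr (Sum.inl j))))))
        (Sum.elim ![Sum.inr 1]
          (fun j => Sum.inl (Sum.inr (Sum.inr (Sum.inr (Sum.inr j)))))))
  let ψ : L.Formula (Fin 1 ⊕ P) := (χ.relabel fmap).iExs (Fin 2)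
  let e : P ≃ Fin (Fintype.card P) := Fintype.equivFin P
  refine ⟨⟨Fintype.card P, ψ.relabel (Sum.map id e), paramsP ∘ e.symm⟩, ?_, ?_⟩
  · rintro B hBi hBm hBf hBs j
    rcases h : e.symm j with k | (k | (k | k)) <;>
      simp only [Function.comp_apply, h, paramsP, Sum.elim_inl, Sum.elim_inr]
    · exact hBs
    · exact hBi k
    · exact hBm k
    · exact hBf k
  · intro x
    have hval : (Sum.elim (fun _ : Fin 1 => x) (paramsP ∘ e.symm)) ∘ (Sum.map id e)
        = Sum.elim (fun _ : Fin 1 => x) paramsP := by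
      funext a
      rcases a with a | a
      · rfl
      · simp
    show (ψ.relabel (Sum.map id e)).Realize (Sum.elim (fun _ => x) (paramsP ∘ e.symm)) ↔ _
    rw [Language.Formula.realize_relabel, hval]
    show ((χ.relabel fmap).iExs (Fin 2)).Realize _ ↔ _
    rw [Language.Formula.realize_iExs]
    simp only [Language.Formula.realize_relabel]
    constructor
    · rintro ⟨i, hi⟩
      rw [Language.Formula.realize_inf, Language.Formula.realize_inf,
        Language.Formula.realize_relabel, Language.Formula.realize_relabel,
        Language.Formula.realize_relabel] at hi
      obtain ⟨h1, h2, h3⟩ := hi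
      have e1 : inv s = i 0 := by
        rw [← hφi s (i 0)]
        exact (ParamFormula.realize_congr φi (by
          funext a; rcases a with k | j
          · fin_cases k <;> rfl
          · rfl)).mp h1
      have e2 : mul (i 0) x = i 1 := by
        rw [← hφm (i 0) x (i 1)]
        exact (ParamFormula.realize_congr φm (by
          funext a; rcases a with k | j
          · fin_cases k <;> rfl
          · rfl)).mp h2
      have e3 : f.Realize (fun _ => i 1) := by
        exact (ParamFormula.realize_congr f (by
          funext a; rcases a with k | j
          · fin_cases k <;> rfl
          · rfl)).mp h3
      rw [e1, e2]
      exact e3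
    · intro hfr
      refine ⟨![inv s, mul (inv s) x], ?_⟩
      rw [Language.Formula.realize_inf, Language.Formula.realize_inf,
        Language.Formula.realize_relabel, Language.Formula.realize_relabel,
        Language.Formula.realize_relabel]
      refine ⟨?_, ?_, ?_⟩
      · exact (ParamFormula.realize_congr φi (by
          funext a; rcases a with k | j
          · fin_cases k <;> rfl
          · rfl)).mpr ((hφi s (inv s)).mpr rfl)
      · exact (ParamFormula.realize_congr φm (by
          funext a; rcases a with k | j
          · fin_cases k <;> rfl
          · rfl)).mpr ((hφm (inv s) x (mul (inv s) x)).mpr rfl)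
      · exact (ParamFormula.realize_congr f (by
          funext a; rcases a with k | j
          · fin_cases k <;> rfl
          · rfl)).mpr hfr

/-- If `s⁻¹d₁` and `s⁻¹d₂` lie in the subgroup `H`, then so does `d₁⁻¹d₂`. -/
theorem key_mem (D : DefGroup L M) {H : Set M} (hH : D.IsSubgroup H)
    {s d1 d2 : M} (hs : s ∈ D.carrier) (hd1 : d1 ∈ D.carrier) (hd2 : d2 ∈ D.carrier)
    (h1 : D.mul (D.inv s) d1 ∈ H) (h2 : D.mul (D.inv s) d2 ∈ H) :
    D.mul (D.inv d1) d2 ∈ H := by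
  have hinvs : D.inv s ∈ D.carrier := D.inv_mem' s hs
  have h1G : D.mul (D.inv s) d1 ∈ D.carrier := hH.1 h1
  have h2G : D.mul (D.inv s) d2 ∈ D.carrier := hH.1 h2
  have hih1 : D.inv (D.mul (D.inv s) d1) ∈ D.carrier := D.inv_mem' _ h1G
  have htH : D.mul (D.inv (D.mul (D.inv s) d1)) (D.mul (D.inv s) d2) ∈ H :=
    hH.2.2.1 _ (hH.2.2.2 _ h1) _ h2
  have htG : D.mul (D.inv (D.mul (D.inv s) d1)) (D.mul (D.inv s) d2) ∈ D.carrier := hH.1 htH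
  have hd1eq : D.mul s (D.mul (D.inv s) d1) = d1 := by
    rw [← D.mul_assoc' s hs _ hinvs d1 hd1, D.mul_inv' s hs, D.one_mul' d1 hd1]
  have hd2eq : D.mul s (D.mul (D.inv s) d2) = d2 := by
    rw [← D.mul_assoc' s hs _ hinvs d2 hd2, D.mul_inv' s hs, D.one_mul' d2 hd2]
  have hmul : D.mul d1 (D.mul (D.inv (D.mul (D.inv s) d1)) (D.mul (D.inv s) d2)) = d2 := by
    calc D.mul d1 (D.mul (D.inv (D.mul (D.inv s) d1)) (D.mul (D.inv s) d2))
        = D.mul (D.mul s (D.mul (D.inv s) d1))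
            (D.mul (D.inv (D.mul (D.inv s) d1)) (D.mul (D.inv s) d2)) := by rw [hd1eq]
      _ = D.mul s (D.mul (D.mul (D.inv s) d1)
            (D.mul (D.inv (D.mul (D.inv s) d1)) (D.mul (D.inv s) d2))) :=
          D.mul_assoc' s hs _ h1G _ htG
      _ = D.mul s (D.mul (D.mul (D.mul (D.inv s) d1) (D.inv (D.mul (D.inv s) d1)))
            (D.mul (D.inv s) d2)) := by rw [D.mul_assoc' _ h1G _ hih1 _ h2G]
      _ = D.mul s (D.mul D.one (D.mul (D.inv s) d2)) := by rw [D.mul_inv' _ h1G]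
      _ = D.mul s (D.mul (D.inv s) d2) := by rw [D.one_mul' _ h2G]
      _ = d2 := hd2eq
  have hfin : D.mul (D.inv d1) d2
      = D.mul (D.inv (D.mul (D.inv s) d1)) (D.mul (D.inv s) d2) := by
    calc D.mul (D.inv d1) d2
        = D.mul (D.inv d1)
            (D.mul d1 (D.mul (D.inv (D.mul (D.inv s) d1)) (D.mul (D.inv s) d2))) := by rw [hmul]
      _ = D.mul (D.mul (D.inv d1) d1)
            (D.mul (D.inv (D.mul (D.inv s) d1)) (D.mul (D.inv s) d2)) := by
          rw [D.mul_assoc' _ (D.inv_mem' d1 hd1) d1 hd1 _ (hmul ▸ htG)]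
      _ = D.mul D.one (D.mul (D.inv (D.mul (D.inv s) d1)) (D.mul (D.inv s) d2)) := by
          rw [D.inv_mul' d1 hd1]
      _ = D.mul (D.inv (D.mul (D.inv s) d1)) (D.mul (D.inv s) d2) := D.one_mul' _ htG
  rw [hfin]
  exact htH

/-- A fold of elements of a subgroup lies in the subgroup. -/
theorem foldr_mem (D : DefGroup L M) {H : Set M} (hH : D.IsSubgroup H) :
    ∀ l : List M, (∀ x ∈ l, x ∈ H) → l.foldr D.mul D.one ∈ H := by
  intro l
  induction l with
  | nil => intro _; exact hH.2.1
  | cons x l ih =>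
      intro h
      exact hH.2.2.1 x (h x (List.mem_cons_self (a := x) (l := l))) _
        (ih fun y hy => h y (List.mem_cons_of_mem x hy))

/-- Observation 1.7(2) of [Sh:886]: if `H` is a subgroup of `G` of bounded index, `ā`
enumerates an elementary submodel containing `A*` and representatives of all left `H`-cosets,
and `p(x) ⊇ p*(x)` is a 1-type over `Rang(ā)` with `p(𝔠) = H`, then `q^n_{ā}(x) ⊢ p(x)`. -/
theorem observation_h12_2
    {L : FirstOrder.Language.{u, u}} {M : Type u} [L.Structure M]
    (κbar : Cardinal.{u}) (hκinacc : κbar.IsInaccessible) (hκT : theoryCard L < κbar)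
    (hκsat : Saturated L M κbar)
    (D : DefGroup L M) (hAκ : #(D.AStar) < κbar)
    (H : Set M) (hH : D.IsSubgroup H) (hidx : D.indexLT H κbar)
    (α : Type u) (hα : #α < κbar) (abar : α → M)
    (S : L.ElementarySubstructure M) (hSrange : (S : Set M) = Set.range abar)
    (hArange : D.AStar ⊆ Set.range abar)
    (hreps : ∀ g ∈ D.carrier, ∃ i : α, abar i ∈ D.carrier ∧ D.mul (D.inv (abar i)) g ∈ H)
    (p : Set (ParamFormula L M 1)) (hpstar : D.pStar ⊆ p)
    (hpover : IsTypeOver p (Set.range abar)) (hpH : realizeSet p = H)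
    (n : ℕ) :
    D.qTupleSet abar n ⊆ realizeSet p := by
  intro c hc
  obtain ⟨d, hdG, hsame, hceq⟩ := hc
  rw [hpH, hceq]
  apply foldr_mem D hH
  intro x hx
  rw [List.mem_ofFn] at hx
  obtain ⟨ℓ, rfl⟩ := hx
  obtain ⟨hd1G, hd2G⟩ := hdG ℓ
  obtain ⟨i, hiG, hiH⟩ := hreps (d ℓ).1 hd1G
  obtain ⟨φm, hφmIn, hφmR⟩ := D.mul_definable
  obtain ⟨φi, hφiIn, hφiR⟩ := D.inv_definable
  refine key_mem D hH hiG hd1G hd2G hiH ?_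
  rw [← hpH] at hiH ⊢
  intro f hf
  obtain ⟨g, hgIn, hgR⟩ := shift_exists φi φm D.inv D.mul hφiR hφmR f (abar i)
  have hg : g.paramsIn (Set.range abar) :=
    hgIn _ (fun j => hArange (hφiIn j)) (fun j => hArange (hφmIn j)) (hpover f hf) ⟨i, rfl⟩
  exact (hgR (d ℓ).2).mp ((hsame ℓ g hg).mp ((hgR (d ℓ).1).mpr (hiH f hf)))

end Paper886
end

section
/- For every ā ∈ ^α𝔠 with α < κ̄, the set ⋃{q^k_{ā}(𝔠) : k < ω} is a union-type-definable subgroup of G of bounded index; in fact its index in G is at most 2^{|T|+|α|}. -/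
open FirstOrder Cardinal Set

universe u

namespace Paper886

variable {L : FirstOrder.Language.{u, u}} {M : Type u} [L.Structure M]

/-! ### Auxiliary formula toolkit -/

section Toolkit

variable {L : FirstOrder.Language.{u, u}} {M : Type u} [L.Structure M]

/-- A parametrized formula with free variables indexed by an arbitrary type `β`. -/
structure PF (L : FirstOrder.Language.{u, u}) (M : Type u) [L.Structure M] (β : Type) :
    Type u where
  m : ℕ
  toFormula : L.Formula (β ⊕ Fin m)
  params : Fin m → M

namespace PF

variable {β γ : Type}

def Realize (f : PF L M β) (v : β → M) : Prop :=
  f.toFormula.Realize (Sum.elim v f.params)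

def paramsIn (f : PF L M β) (B : Set M) : Prop := ∀ i, f.params i ∈ B

/-- Conversion to `ParamFormula`. -/
def toParam {n : ℕ} (f : PF L M (Fin n)) : ParamFormula L M n := ⟨f.m, f.toFormula, f.params⟩

@[simp] theorem realize_toParam {n : ℕ} (f : PF L M (Fin n)) (v : Fin n → M) :
    f.toParam.Realize v ↔ f.Realize v := Iff.rfl

@[simp] theorem paramsIn_toParam {n : ℕ} (f : PF L M (Fin n)) (B : Set M) :
    f.toParam.paramsIn B ↔ f.paramsIn B := Iff.rfl

/-- Conversion from `ParamFormula`. -/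
def ofParam {n : ℕ} (f : ParamFormula L M n) : PF L M (Fin n) := ⟨f.m, f.toFormula, f.params⟩

@[simp] theorem realize_ofParam {n : ℕ} (f : ParamFormula L M n) (v : Fin n → M) :
    (ofParam f).Realize v ↔ f.Realize v := Iff.rfl

@[simp] theorem paramsIn_ofParam {n : ℕ} (f : ParamFormula L M n) (B : Set M) :
    (ofParam f).paramsIn B ↔ f.paramsIn B := Iff.rfl

/-- The always-true parametrized formula. -/
def tru : PF L M β := ⟨0, ⊤, fun i => i.elim0⟩

@[simp] theorem realize_tru (v : β → M) : (tru : PF L M β).Realize v := by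
  simp [Realize, tru]

@[simp] theorem paramsIn_tru (B : Set M) : (tru : PF L M β).paramsIn B := fun i => i.elim0

/-- Conjunction. -/
def and (f g : PF L M β) : PF L M β :=
  ⟨f.m + g.m,
    (f.toFormula.relabel (Sum.map id (Fin.castAdd g.m))) ⊓
      (g.toFormula.relabel (Sum.map id (Fin.natAdd f.m))),
    Fin.append f.params g.params⟩

@[simp] theorem realize_and (f g : PF L M β) (v : β → M) :
    (f.and g).Realize v ↔ f.Realize v ∧ g.Realize v := by
  simp only [Realize, and, FirstOrder.Language.Formula.realize_inf,
    FirstOrder.Language.Formula.realize_relabel]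
  constructor <;> (rintro ⟨h1, h2⟩; constructor) <;>
    [skip; skip; skip; skip] <;>
    (first
      | (convert h1 using 2; funext x; cases x <;> simp [Fin.append_left]
         )
      | (convert h2 using 2; funext x; cases x <;> simp [Fin.append_right]))


@[simp] theorem paramsIn_and {f g : PF L M β} {B : Set M} (hf : f.paramsIn B)
    (hg : g.paramsIn B) : (f.and g).paramsIn B := by
  intro i
  refine Fin.addCases (fun j => ?_) (fun j => ?_) i
  · simpa [and, Fin.append_left] using hf j
  · simpa [and, Fin.append_right] using hg j

/-- Biimplication. -/
def iff (f g : PF L M β) : PF L M β :=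
  ⟨f.m + g.m,
    (f.toFormula.relabel (Sum.map id (Fin.castAdd g.m))).iff
      (g.toFormula.relabel (Sum.map id (Fin.natAdd f.m))),
    Fin.append f.params g.params⟩

@[simp] theorem realize_iff (f g : PF L M β) (v : β → M) :
    (f.iff g).Realize v ↔ (f.Realize v ↔ g.Realize v) := by
  have h1 : (Sum.elim v (Fin.append f.params g.params)) ∘ (Sum.map id (Fin.castAdd g.m))
      = Sum.elim v f.params := by
    funext x; cases x <;> simp [Fin.append_left]
  have h2 : (Sum.elim v (Fin.append f.params g.params)) ∘ (Sum.map id (Fin.natAdd f.m))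
      = Sum.elim v g.params := by
    funext x; cases x <;> simp [Fin.append_right]
  simp only [Realize, iff, FirstOrder.Language.Formula.realize_iff,
    FirstOrder.Language.Formula.realize_relabel, h1, h2]

theorem paramsIn_iff {f g : PF L M β} {B : Set M} (hf : f.paramsIn B)
    (hg : g.paramsIn B) : (f.iff g).paramsIn B := by
  intro i
  refine Fin.addCases (fun j => ?_) (fun j => ?_) i
  · simpa [iff, Fin.append_left] using hf j
  · simpa [iff, Fin.append_right] using hg j

/-- Substitute some variables by parameters, relabel the rest. -/
def subst {j : ℕ} (f : PF L M β) (ρ : β → γ ⊕ Fin j) (extra : Fin j → M) : PF L M γ :=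
  ⟨f.m + j,
    f.toFormula.relabel
      (Sum.elim (fun b => Sum.map id (Fin.natAdd f.m) (ρ b))
        (fun i => Sum.inr (Fin.castAdd j i))),
    Fin.append f.params extra⟩

@[simp] theorem realize_subst {j : ℕ} (f : PF L M β) (ρ : β → γ ⊕ Fin j)
    (extra : Fin j → M) (v : γ → M) :
    (f.subst ρ extra).Realize v ↔ f.Realize (fun b => Sum.elim v extra (ρ b)) := by
  have h : (Sum.elim v (Fin.append f.params extra)) ∘
      (Sum.elim (fun b => Sum.map id (Fin.natAdd f.m) (ρ b))
        (fun i => Sum.inr (Fin.castAdd j i)))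
      = Sum.elim (fun b => Sum.elim v extra (ρ b)) f.params := by
    funext x
    rcases x with b | i
    · rcases hb : ρ b with g | i' <;> simp [hb, Fin.append_right]
    · simp [Fin.append_left]
  simp only [Realize, subst, FirstOrder.Language.Formula.realize_relabel, h]

theorem paramsIn_subst {j : ℕ} {f : PF L M β} {ρ : β → γ ⊕ Fin j} {extra : Fin j → M}
    {B : Set M} (hf : f.paramsIn B) (he : ∀ i, extra i ∈ B) :
    (f.subst ρ extra).paramsIn B := by
  intro i
  refine Fin.addCases (fun j' => ?_) (fun j' => ?_) i
  · simpa [subst, Fin.append_left] using hf j'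
  · simpa [subst, Fin.append_right] using he j'

/-- Relabel variables. -/
def map (g : β → γ) (f : PF L M β) : PF L M γ :=
  f.subst (fun b => Sum.inl (g b)) (fun i => i.elim0)

@[simp] theorem realize_map (g : β → γ) (f : PF L M β) (v : γ → M) :
    (f.map g).Realize v ↔ f.Realize (v ∘ g) := by
  simp [map]; rfl

theorem paramsIn_map {g : β → γ} {f : PF L M β} {B : Set M} (hf : f.paramsIn B) :
    (f.map g).paramsIn B :=
  paramsIn_subst hf (fun i => i.elim0)

/-- Attach a `ParamFormula` along an injection of its variables. -/
def at' {k : ℕ} (f : ParamFormula L M k) (g : Fin k → β) : PF L M β :=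
  (ofParam f).map g

@[simp] theorem realize_at' {k : ℕ} (f : ParamFormula L M k) (g : Fin k → β) (v : β → M) :
    (at' f g).Realize v ↔ f.Realize (v ∘ g) := by
  simp only [at', realize_map, realize_ofParam]

theorem paramsIn_at' {k : ℕ} {f : ParamFormula L M k} {g : Fin k → β} {B : Set M}
    (hf : f.paramsIn B) : (at' f g).paramsIn B :=
  paramsIn_map ((paramsIn_ofParam f B).2 hf)

/-- Existentially quantify the `Fin k` block of variables. -/
noncomputable def exs {k : ℕ} (f : PF L M (β ⊕ Fin k)) : PF L M β :=
  ⟨f.m,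
    (f.toFormula.relabel
      (Sum.elim (Sum.elim (fun b => Sum.inl (Sum.inl b)) (fun w => Sum.inr w))
        (fun i => Sum.inl (Sum.inr i)))).iExs (Fin k),
    f.params⟩

@[simp] theorem realize_exs {k : ℕ} (f : PF L M (β ⊕ Fin k)) (v : β → M) :
    (exs f).Realize v ↔ ∃ w : Fin k → M, f.Realize (Sum.elim v w) := by
  have : ∀ w : Fin k → M,
      (fun a => Sum.elim (Sum.elim v f.params) w
        ((Sum.elim (Sum.elim (fun b => Sum.inl (Sum.inl b)) (fun w => Sum.inr w))
          (fun i => Sum.inl (Sum.inr i))) a))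
      = Sum.elim (Sum.elim v w) f.params := by
    intro w; funext x; rcases x with (b | w') | i <;> simp
  simp only [Realize, exs, FirstOrder.Language.Formula.realize_iExs,
    FirstOrder.Language.Formula.realize_relabel]
  exact exists_congr fun w => by rw [← this w]; rfl

theorem paramsIn_exs {k : ℕ} {f : PF L M (β ⊕ Fin k)} {B : Set M}
    (hf : f.paramsIn B) : (exs f).paramsIn B := hf

/-- Equality of two variables. -/
def eq (b₁ b₂ : β) : PF L M β :=
  ⟨0, FirstOrder.Language.Term.equal
    (FirstOrder.Language.Term.var (Sum.inl b₁)) (FirstOrder.Language.Term.var (Sum.inl b₂)),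
    fun i => i.elim0⟩

@[simp] theorem realize_eq (b₁ b₂ : β) (v : β → M) :
    (eq (L := L) (M := M) b₁ b₂).Realize v ↔ v b₁ = v b₂ := by
  simp [Realize, eq]

theorem paramsIn_eq (b₁ b₂ : β) (B : Set M) : (eq (L := L) (M := M) b₁ b₂).paramsIn B :=
  fun i => i.elim0

/-- Finite conjunction of a list of parametrized formulas. -/
def listInf (l : List (PF L M β)) : PF L M β := l.foldr and tru

@[simp] theorem realize_listInf (l : List (PF L M β)) (v : β → M) :
    (listInf l).Realize v ↔ ∀ f ∈ l, f.Realize v := by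
  induction l with
  | nil => simp [listInf]
  | cons a l ih => simp [listInf, List.foldr_cons] at ih ⊢; simp [ih]

theorem paramsIn_listInf {l : List (PF L M β)} {B : Set M}
    (h : ∀ f ∈ l, f.paramsIn B) : (listInf l).paramsIn B := by
  induction l with
  | nil => exact paramsIn_tru B
  | cons a l ih =>
      exact paramsIn_and (h a (by simp)) (ih fun f hf => h f (by simp [hf]))


/-- Substitute the last variable by a parameter. -/
def substLast {k : ℕ} (f : PF L M (Fin (k + 1))) (a : M) : PF L M (Fin k) :=
  f.subst (fun j => if h : (j : ℕ) < k then Sum.inl (⟨(j : ℕ), h⟩ : Fin k)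
    else Sum.inr (0 : Fin 1)) (fun _ => a)

@[simp] theorem realize_substLast {k : ℕ} (f : PF L M (Fin (k + 1))) (a : M)
    (w : Fin k → M) : (f.substLast a).Realize w ↔ f.Realize (Fin.snoc w a) := by
  rw [substLast, realize_subst]
  have : (fun j : Fin (k+1) => Sum.elim w (fun _ : Fin 1 => a)
      (if h : (j : ℕ) < k then Sum.inl (⟨(j : ℕ), h⟩ : Fin k) else Sum.inr (0 : Fin 1)))
      = Fin.snoc w a := by
    funext j
    refine Fin.lastCases ?_ (fun i => ?_) j
    · rw [dif_neg (by simp), Fin.snoc_last]; rfl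
    · have h : ((Fin.castSucc i : Fin (k+1)) : ℕ) < k := i.isLt
      rw [dif_pos h, Fin.snoc_castSucc]
      simp
  rw [this]

theorem paramsIn_substLast {k : ℕ} {f : PF L M (Fin (k + 1))} {a : M} {B : Set M}
    (hf : f.paramsIn B) (ha : a ∈ B) : (f.substLast a).paramsIn B :=
  paramsIn_subst hf (fun _ => ha)

/-- Substitute the first (`Fin 1`) variable block by a parameter. -/
def substC {k : ℕ} (f : PF L M (Fin 1 ⊕ Fin k)) (c : M) : PF L M (Fin k) :=
  f.subst (Sum.elim (fun _ => Sum.inr (0 : Fin 1)) Sum.inl) (fun _ => c)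

@[simp] theorem realize_substC {k : ℕ} (f : PF L M (Fin 1 ⊕ Fin k)) (c : M)
    (w : Fin k → M) : (f.substC c).Realize w ↔ f.Realize (Sum.elim (fun _ => c) w) := by
  rw [substC, realize_subst]
  have : (fun b => Sum.elim w (fun _ : Fin 1 => c)
      (Sum.elim (fun _ : Fin 1 => Sum.inr (0 : Fin 1)) Sum.inl b))
      = Sum.elim (fun _ : Fin 1 => c) w := by
    funext x; rcases x with x | x <;> simp
  rw [this]

theorem paramsIn_substC {k : ℕ} {f : PF L M (Fin 1 ⊕ Fin k)} {c : M} {B : Set M}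
    (hf : f.paramsIn B) (hc : c ∈ B) : (f.substC c).paramsIn B :=
  paramsIn_subst hf (fun _ => hc)

end PF



end Toolkit

section GroupLemmas

variable {L : FirstOrder.Language.{u, u}} {M : Type u} [L.Structure M] (D : DefGroup L M)

theorem DefGroup.foldr_mem {l : List M} (h : ∀ x ∈ l, x ∈ D.carrier) :
    l.foldr D.mul D.one ∈ D.carrier := by
  induction l with
  | nil => exact D.one_mem'
  | cons a l ih =>
      exact D.mul_mem' a (h a (by simp)) _ (ih fun x hx => h x (by simp [hx]))

theorem DefGroup.foldr_eq_mul {l : List M} {y : M} (h : ∀ x ∈ l, x ∈ D.carrier)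
    (hy : y ∈ D.carrier) : l.foldr D.mul y = D.mul (l.foldr D.mul D.one) y := by
  induction l with
  | nil => exact (D.one_mul' y hy).symm
  | cons a l ih =>
      have hmem : ∀ x ∈ l, x ∈ D.carrier := fun x hx => h x (by simp [hx])
      have ha : a ∈ D.carrier := h a (by simp)
      have hf : l.foldr D.mul D.one ∈ D.carrier := D.foldr_mem hmem
      simp only [List.foldr_cons, ih hmem]
      exact (D.mul_assoc' a ha _ hf y hy).symm

theorem DefGroup.inv_unique {x y : M} (hx : x ∈ D.carrier) (hy : y ∈ D.carrier)
    (h : D.mul x y = D.one) : D.inv x = y := by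
  have hinv : D.inv x ∈ D.carrier := D.inv_mem' x hx
  calc D.inv x = D.mul (D.inv x) D.one := (D.mul_one' _ hinv).symm
    _ = D.mul (D.inv x) (D.mul x y) := by rw [h]
    _ = D.mul (D.mul (D.inv x) x) y := (D.mul_assoc' _ hinv _ hx _ hy).symm
    _ = D.mul D.one y := by rw [D.inv_mul' x hx]
    _ = y := D.one_mul' y hy

theorem DefGroup.inv_one : D.inv D.one = D.one :=
  D.inv_unique D.one_mem' D.one_mem' (D.mul_one' _ D.one_mem')

theorem DefGroup.inv_mul_rev {a b : M} (ha : a ∈ D.carrier) (hb : b ∈ D.carrier) :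
    D.inv (D.mul a b) = D.mul (D.inv b) (D.inv a) := by
  have hab : D.mul a b ∈ D.carrier := D.mul_mem' a ha b hb
  have hia : D.inv a ∈ D.carrier := D.inv_mem' a ha
  have hib : D.inv b ∈ D.carrier := D.inv_mem' b hb
  refine D.inv_unique hab (D.mul_mem' _ hib _ hia) ?_
  calc D.mul (D.mul a b) (D.mul (D.inv b) (D.inv a))
      = D.mul a (D.mul b (D.mul (D.inv b) (D.inv a))) :=
        D.mul_assoc' a ha b hb _ (D.mul_mem' _ hib _ hia)
    _ = D.mul a (D.mul (D.mul b (D.inv b)) (D.inv a)) := by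
        rw [D.mul_assoc' b hb _ hib _ hia]
    _ = D.mul a (D.mul D.one (D.inv a)) := by rw [D.mul_inv' b hb]
    _ = D.mul a (D.inv a) := by rw [D.one_mul' _ hia]
    _ = D.one := D.mul_inv' a ha

theorem DefGroup.inv_inv {a : M} (ha : a ∈ D.carrier) : D.inv (D.inv a) = a :=
  D.inv_unique (D.inv_mem' a ha) ha (D.inv_mul' a ha)

theorem DefGroup.inv_invMul {a b : M} (ha : a ∈ D.carrier) (hb : b ∈ D.carrier) :
    D.inv (D.mul (D.inv a) b) = D.mul (D.inv b) a := by
  rw [D.inv_mul_rev (D.inv_mem' a ha) hb, D.inv_inv ha]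

theorem DefGroup.foldr_inv {l : List M} (h : ∀ x ∈ l, x ∈ D.carrier) :
    ((l.map D.inv).reverse).foldr D.mul D.one = D.inv (l.foldr D.mul D.one) := by
  induction l with
  | nil => simpa using D.inv_one.symm
  | cons a l ih =>
      have hmem : ∀ x ∈ l, x ∈ D.carrier := fun x hx => h x (by simp [hx])
      have ha : a ∈ D.carrier := h a (by simp)
      have hinvmem : ∀ x ∈ (l.map D.inv).reverse, x ∈ D.carrier := by
        intro x hx
        simp only [List.mem_reverse, List.mem_map] at hx
        obtain ⟨y, hy, rfl⟩ := hx
        exact D.inv_mem' y (hmem y hy)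
      have hf : l.foldr D.mul D.one ∈ D.carrier := D.foldr_mem hmem
      simp only [List.map_cons, List.reverse_cons, List.foldr_append, List.foldr_cons,
        List.foldr_nil]
      rw [D.foldr_eq_mul hinvmem (D.mul_mem' _ (D.inv_mem' a ha) _ D.one_mem'), ih hmem,
        D.mul_one' _ (D.inv_mem' a ha), D.inv_mul_rev ha hf]

end GroupLemmas

section QSetLemmas

theorem list_reverse_ofFn {X : Type*} {n : ℕ} (f : Fin n → X) :
    (List.ofFn f).reverse = List.ofFn (fun i => f (Fin.rev i)) := by
  apply List.ext_getElem
  · simp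
  · intro i h1 h2
    simp only [List.getElem_reverse, List.getElem_ofFn, List.length_ofFn,
      List.length_reverse] at *
    congr 1
    apply Fin.ext
    simp [Fin.rev]
    omega

variable {L : FirstOrder.Language.{u, u}} {M : Type u} [L.Structure M] (D : DefGroup L M)
variable {Γ : Set (ParamFormula L M 1)}

theorem DefGroup.qSet_subset_carrier {n : ℕ} : D.qSet Γ n ⊆ D.carrier := by
  rintro c ⟨d, hd, _, rfl⟩
  apply D.foldr_mem
  intro x hx
  rw [List.mem_ofFn] at hx
  obtain ⟨ℓ, rfl⟩ := hx
  exact D.mul_mem' _ (D.inv_mem' _ (hd ℓ).1) _ (hd ℓ).2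

theorem DefGroup.one_mem_qSet : D.one ∈ D.qSet Γ 0 := by
  refine ⟨fun i => i.elim0, fun i => i.elim0, fun i => i.elim0, ?_⟩
  simp

theorem DefGroup.mul_mem_qSet {n m : ℕ} {x y : M} (hx : x ∈ D.qSet Γ n)
    (hy : y ∈ D.qSet Γ m) : D.mul x y ∈ D.qSet Γ (n + m) := by
  obtain ⟨dx, hdx, hsx, rfl⟩ := hx
  obtain ⟨dy, hdy, hsy, rfl⟩ := hy
  refine ⟨Fin.append dx dy, ?_, ?_, ?_⟩
  · intro ℓ
    refine Fin.addCases (fun i => ?_) (fun i => ?_) ℓ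
    · rw [Fin.append_left]; exact hdx i
    · rw [Fin.append_right]; exact hdy i
  · intro ℓ
    refine Fin.addCases (fun i => ?_) (fun i => ?_) ℓ
    · rw [Fin.append_left]; exact hsx i
    · rw [Fin.append_right]; exact hsy i
  · have hsplit : (List.ofFn fun ℓ : Fin (n + m) =>
        D.mul (D.inv (Fin.append dx dy ℓ).1) (Fin.append dx dy ℓ).2)
        = (List.ofFn fun ℓ : Fin n => D.mul (D.inv (dx ℓ).1) (dx ℓ).2)
          ++ (List.ofFn fun ℓ : Fin m => D.mul (D.inv (dy ℓ).1) (dy ℓ).2) := by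
      rw [List.ofFn_add]
      congr 1
      · exact congrArg List.ofFn (funext fun i => by
          rw [show Fin.castLE (Nat.le_add_right n m) i = Fin.castAdd m i from rfl, Fin.append_left])
      · exact congrArg List.ofFn (funext fun i => by rw [Fin.append_right])
    rw [hsplit, List.foldr_append]
    have hmemy : ∀ z ∈ (List.ofFn fun ℓ : Fin m => D.mul (D.inv (dy ℓ).1) (dy ℓ).2),
        z ∈ D.carrier := by
      intro z hz
      rw [List.mem_ofFn] at hz
      obtain ⟨ℓ, rfl⟩ := hz
      exact D.mul_mem' _ (D.inv_mem' _ (hdy ℓ).1) _ (hdy ℓ).2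
    have hmemx : ∀ z ∈ (List.ofFn fun ℓ : Fin n => D.mul (D.inv (dx ℓ).1) (dx ℓ).2),
        z ∈ D.carrier := by
      intro z hz
      rw [List.mem_ofFn] at hz
      obtain ⟨ℓ, rfl⟩ := hz
      exact D.mul_mem' _ (D.inv_mem' _ (hdx ℓ).1) _ (hdx ℓ).2
    rw [D.foldr_eq_mul hmemx (D.foldr_mem hmemy)]

theorem DefGroup.inv_mem_qSet {n : ℕ} {x : M} (hx : x ∈ D.qSet Γ n) :
    D.inv x ∈ D.qSet Γ n := by
  obtain ⟨d, hd, hs, rfl⟩ := hx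
  refine ⟨fun ℓ => ((d (Fin.rev ℓ)).2, (d (Fin.rev ℓ)).1), fun ℓ => ⟨(hd _).2, (hd _).1⟩,
    fun ℓ f hf => (hs _ f hf).symm, ?_⟩
  have hmem : ∀ z ∈ (List.ofFn fun ℓ : Fin n => D.mul (D.inv (d ℓ).1) (d ℓ).2),
      z ∈ D.carrier := by
    intro z hz
    rw [List.mem_ofFn] at hz
    obtain ⟨ℓ, rfl⟩ := hz
    exact D.mul_mem' _ (D.inv_mem' _ (hd ℓ).1) _ (hd ℓ).2
  have key : (List.ofFn fun ℓ : Fin n =>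
      D.mul (D.inv (d (Fin.rev ℓ)).2) (d (Fin.rev ℓ)).1)
      = ((List.ofFn fun ℓ : Fin n => D.mul (D.inv (d ℓ).1) (d ℓ).2).map D.inv).reverse := by
    rw [List.map_ofFn, list_reverse_ofFn]
    congr 1
    funext ℓ
    exact (D.inv_invMul (hd _).1 (hd _).2).symm
  rw [key, D.foldr_inv hmem]

theorem DefGroup.isSubgroup_unionQSet {Γ : Set (ParamFormula L M 1)} :
    D.IsSubgroup (⋃ k : ℕ, D.qSet Γ k) := by
  refine ⟨?_, ?_, ?_, ?_⟩
  · intro x hx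
    rw [Set.mem_iUnion] at hx
    obtain ⟨k, hk⟩ := hx
    exact D.qSet_subset_carrier hk
  · exact Set.mem_iUnion.2 ⟨0, D.one_mem_qSet⟩
  · intro x hx y hy
    rw [Set.mem_iUnion] at hx hy ⊢
    obtain ⟨n, hn⟩ := hx
    obtain ⟨m, hm⟩ := hy
    exact ⟨n + m, D.mul_mem_qSet hn hm⟩
  · intro x hx
    rw [Set.mem_iUnion] at hx ⊢
    obtain ⟨n, hn⟩ := hx
    exact ⟨n, D.inv_mem_qSet hn⟩

end QSetLemmas

section SatTuple

variable {L : FirstOrder.Language.{u, u}} {M : Type u} [L.Structure M]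

/-- The variable relabeling sending the last variable to the `Fin 1` block. -/
def lastToHead (k : ℕ) : Fin (k + 1) → Fin 1 ⊕ Fin k := fun j =>
  if h : (j : ℕ) < k then Sum.inr (⟨(j : ℕ), h⟩ : Fin k) else Sum.inl 0

theorem elim_comp_lastToHead {k : ℕ} (a : M) (w : Fin k → M) :
    (Sum.elim (fun _ : Fin 1 => a) w) ∘ (lastToHead k) = Fin.snoc w a := by
  funext j
  refine Fin.lastCases ?_ (fun i => ?_) j
  · rw [Function.comp_apply, lastToHead, dif_neg (by simp), Fin.snoc_last]
    rfl
  · have h : ((Fin.castSucc i : Fin (k+1)) : ℕ) < k := i.isLt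
    rw [Function.comp_apply, lastToHead, dif_pos h, Fin.snoc_castSucc]
    simp

/-- The projection of the conjunction of a list onto the last variable. -/
noncomputable def projLast {k : ℕ} (l : List (PF L M (Fin (k + 1)))) :
    ParamFormula L M 1 :=
  (PF.exs ((PF.listInf l).map (lastToHead k))).toParam

theorem realize_projLast {k : ℕ} (l : List (PF L M (Fin (k + 1)))) (a : M) :
    ((projLast l).Realize fun _ => a) ↔
      ∃ w : Fin k → M, ∀ f ∈ l, f.Realize (Fin.snoc w a) := by
  rw [projLast]
  rw [show ((PF.exs ((PF.listInf l).map (lastToHead k))).toParam.Realize fun _ => a) ↔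
    (PF.exs ((PF.listInf l).map (lastToHead k))).Realize (fun _ => a) from Iff.rfl]
  rw [PF.realize_exs]
  refine exists_congr fun w => ?_
  rw [PF.realize_map, elim_comp_lastToHead, PF.realize_listInf]

theorem paramsIn_projLast {k : ℕ} {l : List (PF L M (Fin (k + 1)))} {B : Set M}
    (h : ∀ f ∈ l, f.paramsIn B) : (projLast l).paramsIn B :=
  PF.paramsIn_exs (PF.paramsIn_map (PF.paramsIn_listInf h))

theorem mk_union_singleton_lt {κ : Cardinal.{u}} (hκ : ℵ₀ < κ) {B : Set M} (hB : #B < κ)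
    (a : M) : #(↥(B ∪ {a})) < κ := by
  refine lt_of_le_of_lt (Cardinal.mk_union_le B {a}) ?_
  have h1 : #({a} : Set M) < κ := by
    rw [Cardinal.mk_singleton]
    exact lt_trans Cardinal.one_lt_aleph0 hκ
  exact Cardinal.add_lt_of_lt hκ.le hB h1

/-- Simultaneous realization of a finitely satisfiable family of formulas
in finitely many variables, from `1`-type saturation. -/
theorem satTuple {κ : Cardinal.{u}} (hsat : Saturated L M κ) (hκ : ℵ₀ < κ) :
    ∀ (k : ℕ) (B : Set M), #B < κ → ∀ p : Set (PF L M (Fin k)),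
      (∀ f ∈ p, f.paramsIn B) →
      (∀ l : List (PF L M (Fin k)), (∀ f ∈ l, f ∈ p) → ∃ v, ∀ f ∈ l, f.Realize v) →
      ∃ v : Fin k → M, ∀ f ∈ p, f.Realize v := by
  intro k
  induction k with
  | zero =>
      intro B hB p hp hfin
      refine ⟨fun i => i.elim0, fun f hf => ?_⟩
      obtain ⟨v, hv⟩ := hfin [f] (by simpa using hf)
      have : v = fun i : Fin 0 => i.elim0 := Subsingleton.elim _ _
      rw [← this]
      exact hv f (by simp)
  | succ k ih =>
      intro B hB p hp hfin
      classical
      set p₀ : Set (ParamFormula L M 1) :=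
        {g | ∃ l : List (PF L M (Fin (k + 1))), (∀ f ∈ l, f ∈ p) ∧ g = projLast l} with hp₀
      have hover : IsTypeOver p₀ B := by
        rintro g ⟨l, hl, rfl⟩
        exact paramsIn_projLast fun f hf => hp f (hl f hf)
      have hfinsat : ∀ s : Set (ParamFormula L M 1), s ⊆ p₀ → s.Finite →
          ∃ a : M, ∀ f ∈ s, f.Realize fun _ => a := by
        intro s hs hsfin
        set pick : ParamFormula L M 1 → List (PF L M (Fin (k + 1))) := fun g =>
          if h : g ∈ p₀ then h.choose else [] with hpick
        set Lstar : List (PF L M (Fin (k + 1))) := hsfin.toFinset.toList.flatMap pick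
          with hLstar
        have hLp : ∀ f ∈ Lstar, f ∈ p := by
          intro f hf
          rw [hLstar, List.mem_flatMap] at hf
          obtain ⟨g, hg, hfg⟩ := hf
          rw [Finset.mem_toList, Set.Finite.mem_toFinset] at hg
          have hgp : g ∈ p₀ := hs hg
          rw [hpick] at hfg
          simp only [dif_pos hgp] at hfg
          exact hgp.choose_spec.1 f hfg
        obtain ⟨v, hv⟩ := hfin Lstar hLp
        refine ⟨v (Fin.last k), ?_⟩
        intro g hg
        have hgp : g ∈ p₀ := hs hg
        have hspec := hgp.choose_spec
        rw [hspec.2, realize_projLast]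
        refine ⟨Fin.init v, ?_⟩
        rw [Fin.snoc_init_self]
        intro f hf
        apply hv
        rw [hLstar, List.mem_flatMap]
        refine ⟨g, ?_, ?_⟩
        · rw [Finset.mem_toList, Set.Finite.mem_toFinset]; exact hg
        · rw [hpick]; simp only [dif_pos hgp]; exact hf
      obtain ⟨a, ha⟩ := hsat B hB p₀ hover hfinsat
      have ha' : ∀ l : List (PF L M (Fin (k + 1))), (∀ f ∈ l, f ∈ p) →
          ∃ w : Fin k → M, ∀ f ∈ l, f.Realize (Fin.snoc w a) := by
        intro l hl
        have : (projLast l).Realize fun _ => a := ha (projLast l) ⟨l, hl, rfl⟩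
        rwa [realize_projLast] at this
      set p₁ : Set (PF L M (Fin k)) := (fun f => f.substLast a) '' p with hp₁
      have hover₁ : ∀ f ∈ p₁, f.paramsIn (B ∪ {a}) := by
        rintro g ⟨f, hf, rfl⟩
        exact PF.paramsIn_substLast (fun i => Set.mem_union_left _ (hp f hf i))
          (Set.mem_union_right _ rfl)
      have hfin₁ : ∀ l : List (PF L M (Fin k)), (∀ f ∈ l, f ∈ p₁) →
          ∃ v, ∀ f ∈ l, f.Realize v := by
        intro l₁ hl₁
        set back : PF L M (Fin k) → PF L M (Fin (k + 1)) := fun g =>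
          if h : ∃ f ∈ p, f.substLast a = g then h.choose else PF.tru with hback
        have hback_spec : ∀ g ∈ l₁, back g ∈ p ∧ (back g).substLast a = g := by
          intro g hg
          have : ∃ f ∈ p, f.substLast a = g := by
            obtain ⟨f, hf, rfl⟩ := hl₁ g hg
            exact ⟨f, hf, rfl⟩
          rw [hback]
          simp only [dif_pos this]
          exact this.choose_spec
        obtain ⟨w, hw⟩ := ha' (l₁.map back) (by
          intro f hf
          rw [List.mem_map] at hf
          obtain ⟨g, hg, rfl⟩ := hf
          exact (hback_spec g hg).1)
        refine ⟨w, fun g hg => ?_⟩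
        have hspec := hback_spec g hg
        rw [← hspec.2, PF.realize_substLast]
        exact hw (back g) (List.mem_map_of_mem (f := back) hg)
      obtain ⟨w, hw⟩ := ih (B ∪ {a}) (mk_union_singleton_lt hκ hB a) p₁ hover₁ hfin₁
      refine ⟨Fin.snoc w a, fun f hf => ?_⟩
      have := hw (f.substLast a) ⟨f, hf, rfl⟩
      rwa [PF.realize_substLast] at this

end SatTuple

section BigFormula

variable {L : FirstOrder.Language.{u, u}} {M : Type u} [L.Structure M]

/-- Index of the `i`-th `d`-variable among the `5n+1` auxiliary variables. -/
def vD (n : ℕ) (i : Fin (2 * n)) : Fin (5 * n + 1) := ⟨(i : ℕ), by have := i.isLt; omega⟩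
/-- Index of the `i`-th `e`-variable (inverse witnesses). -/
def vE (n : ℕ) (i : Fin n) : Fin (5 * n + 1) := ⟨2 * n + (i : ℕ), by have := i.isLt; omega⟩
/-- Index of the `i`-th `c`-variable (the products `d₂ℓ⁻¹ d₂ℓ₊₁`). -/
def vC (n : ℕ) (i : Fin n) : Fin (5 * n + 1) := ⟨3 * n + (i : ℕ), by have := i.isLt; omega⟩
/-- Index of the `i`-th partial-product variable. -/
def vP (n : ℕ) (i : Fin (n + 1)) : Fin (5 * n + 1) := ⟨4 * n + (i : ℕ), by have := i.isLt; omega⟩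

/-- `2ℓ` as an element of `Fin (2n)`. -/
def dFst {n : ℕ} (ℓ : Fin n) : Fin (2 * n) := ⟨2 * (ℓ : ℕ), by have := ℓ.isLt; omega⟩
/-- `2ℓ+1` as an element of `Fin (2n)`. -/
def dSnd {n : ℕ} (ℓ : Fin n) : Fin (2 * n) := ⟨2 * (ℓ : ℕ) + 1, by have := ℓ.isLt; omega⟩

variable (φmul : ParamFormula L M 3) (φinv : ParamFormula L M 2) (φone : ParamFormula L M 1)

/-- The matrix of the approximation formula. -/
def bigPF (n : ℕ) (Δ Φ : List (ParamFormula L M 1)) :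
    PF L M (Fin 1 ⊕ Fin (5 * n + 1)) :=
  (PF.eq (Sum.inl 0) (Sum.inr (vP n 0))).and <|
  (PF.at' φone ![Sum.inr (vP n (Fin.last n))]).and <|
  (PF.listInf ((List.finRange n).map fun ℓ =>
    PF.at' φinv ![Sum.inr (vD n (dFst ℓ)), Sum.inr (vE n ℓ)])).and <|
  (PF.listInf ((List.finRange n).map fun ℓ =>
    PF.at' φmul ![Sum.inr (vE n ℓ), Sum.inr (vD n (dSnd ℓ)), Sum.inr (vC n ℓ)])).and <|
  (PF.listInf ((List.finRange n).map fun ℓ =>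
    PF.at' φmul ![Sum.inr (vC n ℓ), Sum.inr (vP n ℓ.succ), Sum.inr (vP n ℓ.castSucc)])).and <|
  (PF.listInf (Δ.map fun f => PF.listInf ((List.finRange (2 * n)).map fun ℓ =>
    PF.at' f ![Sum.inr (vD n ℓ)]))).and <|
  (PF.listInf (Φ.map fun f => PF.listInf ((List.finRange n).map fun ℓ =>
    (PF.at' f ![Sum.inr (vD n (dFst ℓ))]).iff (PF.at' f ![Sum.inr (vD n (dSnd ℓ))]))))

/-- The semantics of the matrix. -/
def BigSem (n : ℕ) (Δ Φ : List (ParamFormula L M 1)) (c : M) (w : Fin (5 * n + 1) → M) :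
    Prop :=
  c = w (vP n 0) ∧
  φone.Realize ![w (vP n (Fin.last n))] ∧
  (∀ ℓ : Fin n, φinv.Realize ![w (vD n (dFst ℓ)), w (vE n ℓ)]) ∧
  (∀ ℓ : Fin n, φmul.Realize ![w (vE n ℓ), w (vD n (dSnd ℓ)), w (vC n ℓ)]) ∧
  (∀ ℓ : Fin n, φmul.Realize ![w (vC n ℓ), w (vP n ℓ.succ), w (vP n ℓ.castSucc)]) ∧
  (∀ f ∈ Δ, ∀ ℓ : Fin (2 * n), f.Realize fun _ => w (vD n ℓ)) ∧
  (∀ f ∈ Φ, ∀ ℓ : Fin n,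
    (f.Realize fun _ => w (vD n (dFst ℓ))) ↔ (f.Realize fun _ => w (vD n (dSnd ℓ))))

theorem comp_vec1 {β : Type} (v : β → M) (a : β) :
    v ∘ ![a] = ![v a] := by
  funext i; fin_cases i <;> rfl

theorem comp_vec2 {β : Type} (v : β → M) (a b : β) :
    v ∘ ![a, b] = ![v a, v b] := by
  funext i; fin_cases i <;> rfl

theorem comp_vec3 {β : Type} (v : β → M) (a b c : β) :
    v ∘ ![a, b, c] = ![v a, v b, v c] := by
  funext i; fin_cases i <;> rfl

theorem vec1_eq_const (x : M) : (![x] : Fin 1 → M) = fun _ => x := by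
  funext i; fin_cases i <;> rfl

theorem realize_bigPF (n : ℕ) (Δ Φ : List (ParamFormula L M 1)) (c : M)
    (w : Fin (5 * n + 1) → M) :
    (bigPF φmul φinv φone n Δ Φ).Realize (Sum.elim (fun _ => c) w) ↔
      BigSem φmul φinv φone n Δ Φ c w := by
  have hw : ∀ i : Fin (5 * n + 1),
      (Sum.elim (fun _ : Fin 1 => c) w) (Sum.inr i) = w i := fun _ => rfl
  rw [bigPF, BigSem]
  simp only [PF.realize_and, PF.realize_eq, PF.realize_at', PF.realize_iff,
    PF.realize_listInf, List.mem_map, List.mem_finRange, true_and,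
    forall_exists_index, and_imp, forall_apply_eq_imp_iff₂, forall_apply_eq_imp_iff,
    comp_vec1, comp_vec2, comp_vec3, Sum.elim_inl, Sum.elim_inr, vec1_eq_const]
  constructor <;>
  · rintro ⟨h1, h2, h3, h4, h5, h6, h7⟩
    refine ⟨h1, ?_, fun ℓ => ?_, fun ℓ => ?_, fun ℓ => ?_, fun f hf ℓ => ?_,
      fun f hf ℓ => ?_⟩
    · convert h2 using 2 <;> rfl
    · convert h3 ℓ using 2 <;> (funext i; fin_cases i <;> rfl)
    · convert h4 ℓ using 2 <;> (funext i; fin_cases i <;> rfl)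
    · convert h5 ℓ using 2 <;> (funext i; fin_cases i <;> rfl)
    · convert h6 f hf ℓ using 2 <;> rfl
    · convert h7 f hf ℓ using 2 <;> (funext i; fin_cases i <;> rfl)

theorem paramsIn_bigPF {n : ℕ} {Δ Φ : List (ParamFormula L M 1)} {A B : Set M}
    (hmul : φmul.paramsIn A) (hinv : φinv.paramsIn A) (hone : φone.paramsIn A)
    (hΔ : ∀ f ∈ Δ, f.paramsIn A) (hΦ : ∀ f ∈ Φ, f.paramsIn B) :
    (bigPF φmul φinv φone n Δ Φ).paramsIn (A ∪ B) := by
  have hA : ∀ {g : ParamFormula L M 1}, g.paramsIn A → g.paramsIn (A ∪ B) :=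
    fun h i => Set.mem_union_left _ (h i)
  refine PF.paramsIn_and (PF.paramsIn_eq _ _ _) ?_
  refine PF.paramsIn_and (PF.paramsIn_at' (fun i => Set.mem_union_left _ (hone i))) ?_
  refine PF.paramsIn_and (PF.paramsIn_listInf ?_) ?_
  · intro g hg
    rw [List.mem_map] at hg
    obtain ⟨ℓ, -, rfl⟩ := hg
    exact PF.paramsIn_at' (fun i => Set.mem_union_left _ (hinv i))
  refine PF.paramsIn_and (PF.paramsIn_listInf ?_) ?_
  · intro g hg
    rw [List.mem_map] at hg
    obtain ⟨ℓ, -, rfl⟩ := hg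
    exact PF.paramsIn_at' (fun i => Set.mem_union_left _ (hmul i))
  refine PF.paramsIn_and (PF.paramsIn_listInf ?_) ?_
  · intro g hg
    rw [List.mem_map] at hg
    obtain ⟨ℓ, -, rfl⟩ := hg
    exact PF.paramsIn_at' (fun i => Set.mem_union_left _ (hmul i))
  refine PF.paramsIn_and (PF.paramsIn_listInf ?_) (PF.paramsIn_listInf ?_)
  · intro g hg
    rw [List.mem_map] at hg
    obtain ⟨f, hf, rfl⟩ := hg
    refine PF.paramsIn_listInf ?_
    intro g' hg'
    rw [List.mem_map] at hg'
    obtain ⟨ℓ, -, rfl⟩ := hg'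
    exact PF.paramsIn_at' (fun i => Set.mem_union_left _ (hΔ f hf i))
  · intro g hg
    rw [List.mem_map] at hg
    obtain ⟨f, hf, rfl⟩ := hg
    refine PF.paramsIn_listInf ?_
    intro g' hg'
    rw [List.mem_map] at hg'
    obtain ⟨ℓ, -, rfl⟩ := hg'
    exact PF.paramsIn_iff (PF.paramsIn_at' (fun i => Set.mem_union_right _ (hΦ f hf i)))
      (PF.paramsIn_at' (fun i => Set.mem_union_right _ (hΦ f hf i)))

end BigFormula

section Bridge

variable {L : FirstOrder.Language.{u, u}} {M : Type u} [L.Structure M]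
variable (D : DefGroup L M)
variable (φmul : ParamFormula L M 3) (φinv : ParamFormula L M 2) (φone : ParamFormula L M 1)
variable (hmul : ∀ x y z : M, φmul.Realize ![x, y, z] ↔ D.mul x y = z)
variable (hinv : ∀ x y : M, φinv.Realize ![x, y] ↔ D.inv x = y)
variable (hone : ∀ x : M, φone.Realize ![x] ↔ x = D.one)
variable {Γ : Set (ParamFormula L M 1)}

theorem bigSem_mono {n : ℕ} {Δ Φ Δ' Φ' : List (ParamFormula L M 1)} {c : M}
    {w : Fin (5 * n + 1) → M} (hΔ : ∀ f ∈ Δ', f ∈ Δ) (hΦ : ∀ f ∈ Φ', f ∈ Φ)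
    (h : BigSem φmul φinv φone n Δ Φ c w) : BigSem φmul φinv φone n Δ' Φ' c w :=
  ⟨h.1, h.2.1, h.2.2.1, h.2.2.2.1, h.2.2.2.2.1,
    fun f hf => h.2.2.2.2.2.1 f (hΔ f hf), fun f hf => h.2.2.2.2.2.2 f (hΦ f hf)⟩

include hmul hinv hone

theorem qSet_to_bigSem {n : ℕ} {c : M} (hc : c ∈ D.qSet Γ n)
    {Δ Φ : List (ParamFormula L M 1)} (hΔ : ∀ f ∈ Δ, f ∈ D.pStar)
    (hΦ : ∀ f ∈ Φ, f ∈ Γ) :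
    ∃ w : Fin (5 * n + 1) → M, BigSem φmul φinv φone n Δ Φ c w := by
  obtain ⟨d, hd, hs, rfl⟩ := hc
  set cf : Fin n → M := fun ℓ => D.mul (D.inv (d ℓ).1) (d ℓ).2 with hcf
  set dd : Fin (2 * n) → M := fun i =>
    if (i : ℕ) % 2 = 0 then (d ⟨(i : ℕ) / 2, by have := i.isLt; omega⟩).1
    else (d ⟨(i : ℕ) / 2, by have := i.isLt; omega⟩).2 with hdd
  set prods : Fin (n + 1) → M := fun i => ((List.ofFn cf).drop (i : ℕ)).foldr D.mul D.one
    with hprods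
  set w : Fin (5 * n + 1) → M := fun j =>
    if h1 : (j : ℕ) < 2 * n then dd ⟨(j : ℕ), h1⟩
    else if h2 : (j : ℕ) < 3 * n then D.inv (d ⟨(j : ℕ) - 2 * n, by omega⟩).1
    else if h3 : (j : ℕ) < 4 * n then cf ⟨(j : ℕ) - 3 * n, by omega⟩
    else prods ⟨(j : ℕ) - 4 * n, by have := j.isLt; omega⟩ with hwdef
  have hwD : ∀ i : Fin (2 * n), w (vD n i) = dd i := by
    intro i
    rw [hwdef]
    simp only [vD]
    exact dif_pos i.isLt
  have hwE : ∀ ℓ : Fin n, w (vE n ℓ) = D.inv (d ℓ).1 := by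
    intro ℓ
    have hℓ := ℓ.isLt
    rw [hwdef]
    dsimp only [vE]
    rw [dif_neg (by omega), dif_pos (by omega)]
    simp only [show 2 * n + (ℓ : ℕ) - 2 * n = (ℓ : ℕ) from by omega, Fin.eta]
  have hwC : ∀ ℓ : Fin n, w (vC n ℓ) = cf ℓ := by
    intro ℓ
    have hℓ := ℓ.isLt
    rw [hwdef]
    dsimp only [vC]
    rw [dif_neg (by omega), dif_neg (by omega), dif_pos (by omega)]
    simp only [show 3 * n + (ℓ : ℕ) - 3 * n = (ℓ : ℕ) from by omega, Fin.eta]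
  have hwP : ∀ i : Fin (n + 1), w (vP n i) = prods i := by
    intro i
    have hi := i.isLt
    rw [hwdef]
    dsimp only [vP]
    rw [dif_neg (by omega), dif_neg (by omega), dif_neg (by omega)]
    simp only [show 4 * n + (i : ℕ) - 4 * n = (i : ℕ) from by omega, Fin.eta]
  have hddFst : ∀ ℓ : Fin n, dd (dFst ℓ) = (d ℓ).1 := by
    intro ℓ
    rw [hdd]
    dsimp only [dFst]
    rw [if_pos (by omega)]
    simp only [show 2 * (ℓ : ℕ) / 2 = (ℓ : ℕ) from by omega, Fin.eta]
  have hddSnd : ∀ ℓ : Fin n, dd (dSnd ℓ) = (d ℓ).2 := by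
    intro ℓ
    rw [hdd]
    dsimp only [dSnd]
    rw [if_neg (by omega)]
    simp only [show (2 * (ℓ : ℕ) + 1) / 2 = (ℓ : ℕ) from by omega, Fin.eta]
  have hddmem : ∀ i : Fin (2 * n), dd i ∈ D.carrier := by
    intro i
    rw [hdd]
    dsimp only
    split
    · exact (hd _).1
    · exact (hd _).2
  refine ⟨w, ?_, ?_, fun ℓ => ?_, fun ℓ => ?_, fun ℓ => ?_, fun f hf ℓ => ?_,
    fun f hf ℓ => ?_⟩
  · rw [hwP]
    simp [hprods]
  · rw [hwP, hone]
    simp only [hprods, Fin.val_last]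
    rw [List.drop_eq_nil_of_le (by simp)]
    rfl
  · rw [hwD, hwE, hinv, hddFst]
  · rw [hwE, hwD, hwC, hmul, hddSnd, hcf]
  · rw [hwC, hwP, hwP, hmul]
    have hlen : (ℓ : ℕ) < (List.ofFn cf).length := by simp [ℓ.isLt]
    rw [hprods]
    simp only [Fin.coe_castSucc, Fin.val_succ]
    rw [List.drop_eq_getElem_cons hlen, List.getElem_ofFn]
    simp [hcf]
  · rw [hwD]
    exact hddmem ℓ f (hΔ f hf)
  · rw [hwD, hwD, hddFst, hddSnd]
    exact hs ℓ f (hΦ f hf)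

theorem bigSem_to_qSet {n : ℕ} {c : M} {w : Fin (5 * n + 1) → M}
    (hw : ∀ Δ Φ : List (ParamFormula L M 1), (∀ f ∈ Δ, f ∈ D.pStar) →
      (∀ f ∈ Φ, f ∈ Γ) → BigSem φmul φinv φone n Δ Φ c w) :
    c ∈ D.qSet Γ n := by
  obtain ⟨h1, h2, h3, h4, h5, -, -⟩ := hw [] [] (by simp) (by simp)
  set d : Fin n → M × M := fun ℓ => (w (vD n (dFst ℓ)), w (vD n (dSnd ℓ))) with hddef
  set cf : Fin n → M := fun ℓ => D.mul (D.inv (d ℓ).1) (d ℓ).2 with hcf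
  have hwC : ∀ ℓ : Fin n, w (vC n ℓ) = cf ℓ := by
    intro ℓ
    have he := (hinv _ _).1 (h3 ℓ)
    have hc' := (hmul _ _ _).1 (h4 ℓ)
    rw [← hc', ← he]
  have hkey : ∀ i : Fin (n + 1),
      w (vP n i) = ((List.ofFn cf).drop (i : ℕ)).foldr D.mul D.one := by
    intro i
    induction i using Fin.reverseInduction with
    | last =>
        have := (hone _).1 h2
        rw [this, Fin.val_last, List.drop_eq_nil_of_le (by simp)]
        rfl
    | cast ℓ ih =>
        have hstep := (hmul _ _ _).1 (h5 ℓ)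
        have hlen : (ℓ : ℕ) < (List.ofFn cf).length := by simp [ℓ.isLt]
        rw [show ((ℓ.castSucc : Fin (n+1)) : ℕ) = (ℓ : ℕ) from rfl]
        rw [List.drop_eq_getElem_cons hlen, List.getElem_ofFn, List.foldr_cons]
        rw [← hstep, hwC, ih]
        congr 1
  have hmemD : ∀ i : Fin (2 * n), w (vD n i) ∈ D.carrier := by
    intro i f hf
    exact (hw [f] [] (by simpa using hf) (by simp)).2.2.2.2.2.1 f (by simp) i
  refine ⟨d, fun ℓ => ⟨hmemD _, hmemD _⟩, ?_, ?_⟩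
  · intro ℓ f hf
    exact (hw [] [f] (by simp) (by simpa using hf)).2.2.2.2.2.2 f (by simp) ℓ
  · rw [h1, hkey 0]
    rfl

end Bridge

section TypeDef

variable {L : FirstOrder.Language.{u, u}} {M : Type u} [L.Structure M]
variable (φmul : ParamFormula L M 3) (φinv : ParamFormula L M 2) (φone : ParamFormula L M 1)
variable (D : DefGroup L M) (A : Set M)

/-- The partial type whose realization set is `q^n`. -/
noncomputable def Pn (n : ℕ) : Set (ParamFormula L M 1) :=
  {g | ∃ Δ Φ : List (ParamFormula L M 1), (∀ f ∈ Δ, f ∈ D.pStar) ∧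
    (∀ f ∈ Φ, f.paramsIn A) ∧
    g = (PF.exs (bigPF φmul φinv φone n Δ Φ)).toParam}

variable (hmul : ∀ x y z : M, φmul.Realize ![x, y, z] ↔ D.mul x y = z)
variable (hinv : ∀ x y : M, φinv.Realize ![x, y] ↔ D.inv x = y)
variable (hone : ∀ x : M, φone.Realize ![x] ↔ x = D.one)
variable (hmulP : φmul.paramsIn D.AStar) (hinvP : φinv.paramsIn D.AStar)
variable (honeP : φone.paramsIn D.AStar)

include hmulP hinvP honeP in
theorem isTypeOver_Pn (n : ℕ) : IsTypeOver (Pn φmul φinv φone D A n) (D.AStar ∪ A) := by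
  rintro g ⟨Δ, Φ, hΔ, hΦ, rfl⟩
  rw [PF.paramsIn_toParam]
  exact PF.paramsIn_exs (paramsIn_bigPF φmul φinv φone hmulP hinvP honeP
    (fun f hf => D.pStar_over f (hΔ f hf)) hΦ)

include hmul hinv hone hmulP hinvP honeP

theorem realizeSet_Pn {κ : Cardinal.{u}} (hsat : Saturated L M κ) (hκ : ℵ₀ < κ)
    (hAA : #(↥(D.AStar ∪ A)) < κ) (n : ℕ) :
    realizeSet (Pn φmul φinv φone D A n) = D.qSet {f | f.paramsIn A} n := by
  classical
  apply Set.Subset.antisymm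
  · intro c hc
    set p : Set (PF L M (Fin (5 * n + 1))) :=
      {g | ∃ Δ Φ : List (ParamFormula L M 1), (∀ f ∈ Δ, f ∈ D.pStar) ∧
        (∀ f ∈ Φ, f.paramsIn A) ∧ g = (bigPF φmul φinv φone n Δ Φ).substC c} with hpdef
    have hover : ∀ g ∈ p, g.paramsIn ((D.AStar ∪ A) ∪ {c}) := by
      rintro g ⟨Δ, Φ, hΔ, hΦ, rfl⟩
      exact PF.paramsIn_substC
        (fun i => Set.mem_union_left _ (paramsIn_bigPF φmul φinv φone hmulP hinvP honeP
          (fun f hf => D.pStar_over f (hΔ f hf)) hΦ i))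
        (Set.mem_union_right _ rfl)
    have hfinsat : ∀ l : List (PF L M (Fin (5 * n + 1))), (∀ g ∈ l, g ∈ p) →
        ∃ v, ∀ g ∈ l, g.Realize v := by
      intro l hl
      set ΔX : PF L M (Fin (5 * n + 1)) → List (ParamFormula L M 1) := fun g =>
        if h : g ∈ p then h.choose else [] with hΔX
      set ΦX : PF L M (Fin (5 * n + 1)) → List (ParamFormula L M 1) := fun g =>
        if h : g ∈ p then h.choose_spec.choose else [] with hΦX
      have hXspec : ∀ g ∈ l, (∀ f ∈ ΔX g, f ∈ D.pStar) ∧ (∀ f ∈ ΦX g, f.paramsIn A) ∧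
          g = (bigPF φmul φinv φone n (ΔX g) (ΦX g)).substC c := by
        intro g hg
        have hgp := hl g hg
        rw [hΔX, hΦX]
        simp only [dif_pos hgp]
        exact ⟨hgp.choose_spec.choose_spec.1, hgp.choose_spec.choose_spec.2.1,
          hgp.choose_spec.choose_spec.2.2⟩
      set Δs : List (ParamFormula L M 1) := l.flatMap ΔX with hΔs
      set Φs : List (ParamFormula L M 1) := l.flatMap ΦX with hΦs
      have hΔsp : ∀ f ∈ Δs, f ∈ D.pStar := by
        intro f hf
        rw [hΔs, List.mem_flatMap] at hf
        obtain ⟨g, hg, hfg⟩ := hf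
        exact (hXspec g hg).1 f hfg
      have hΦsp : ∀ f ∈ Φs, f.paramsIn A := by
        intro f hf
        rw [hΦs, List.mem_flatMap] at hf
        obtain ⟨g, hg, hfg⟩ := hf
        exact (hXspec g hg).2.1 f hfg
      have hcreal : ((PF.exs (bigPF φmul φinv φone n Δs Φs)).toParam.Realize
          fun _ => c) := hc _ ⟨Δs, Φs, hΔsp, hΦsp, rfl⟩
      rw [PF.realize_toParam, PF.realize_exs] at hcreal
      obtain ⟨w, hw⟩ := hcreal
      rw [realize_bigPF] at hw
      refine ⟨w, fun g hg => ?_⟩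
      obtain ⟨h1, h2, h3⟩ := hXspec g hg
      rw [h3, PF.realize_substC, realize_bigPF]
      refine bigSem_mono φmul φinv φone ?_ ?_ hw
      · intro f hf
        rw [hΔs, List.mem_flatMap]
        exact ⟨g, hg, hf⟩
      · intro f hf
        rw [hΦs, List.mem_flatMap]
        exact ⟨g, hg, hf⟩
    obtain ⟨w, hw⟩ := satTuple hsat hκ (5 * n + 1) ((D.AStar ∪ A) ∪ {c})
      (mk_union_singleton_lt hκ hAA c) p hover hfinsat
    refine bigSem_to_qSet D φmul φinv φone hmul hinv hone (w := w) ?_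
    intro Δ Φ hΔ hΦ
    have := hw ((bigPF φmul φinv φone n Δ Φ).substC c) ⟨Δ, Φ, hΔ, hΦ, rfl⟩
    rwa [PF.realize_substC, realize_bigPF] at this
  · intro c hc
    rintro g ⟨Δ, Φ, hΔ, hΦ, rfl⟩
    rw [PF.realize_toParam, PF.realize_exs]
    obtain ⟨w, hw⟩ := qSet_to_bigSem D φmul φinv φone hmul hinv hone hc hΔ hΦ
    exact ⟨w, (realize_bigPF φmul φinv φone n Δ Φ c w).2 hw⟩

end TypeDef

section Cardinality

variable {L : FirstOrder.Language.{u, u}} {M : Type u} [L.Structure M]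

theorem aleph0_le_theoryCard : ℵ₀ ≤ theoryCard L := le_max_left _ _

theorem mk_formula_le (m : ℕ) : #(L.Formula (Fin 1 ⊕ Fin m)) ≤ theoryCard L := by
  have hinj : Function.Injective
      (fun φ : L.Formula (Fin 1 ⊕ Fin m) => (⟨0, φ⟩ : Σ n, L.BoundedFormula (Fin 1 ⊕ Fin m) n)) := by
    intro a b h
    exact eq_of_heq (Sigma.mk.inj_iff.1 h).2
  refine (Cardinal.mk_le_of_injective hinj).trans ?_
  refine (FirstOrder.Language.BoundedFormula.card_le).trans ?_
  rw [theoryCard]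
  refine max_le (le_max_left _ _) ?_
  have h1 : Cardinal.lift.{u} #(Fin 1 ⊕ Fin m) ≤ ℵ₀ := by
    simp only [Cardinal.mk_sum, Cardinal.mk_fin, Cardinal.lift_add, Cardinal.lift_natCast]
    exact le_of_lt (by exact_mod_cast Cardinal.nat_lt_aleph0 (1 + m))
  refine le_trans (add_le_add h1 le_rfl) ?_
  rw [Cardinal.add_eq_max le_rfl]
  exact max_le (le_max_left _ _) (by simp [FirstOrder.Language.card])

theorem mk_tuple_le {X : Type u} {θ : Cardinal.{u}} (hθ : ℵ₀ ≤ θ) (hX : #X ≤ θ) (m : ℕ) :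
    #(Fin m → X) ≤ θ := by
  induction m with
  | zero =>
      have : Subsingleton (Fin 0 → X) := ⟨fun f g => funext fun i => i.elim0⟩
      exact le_trans Cardinal.mk_le_aleph0 hθ
  | succ m ih =>
      have hinj : Function.Injective
          (fun f : Fin (m + 1) → X => ((Fin.init f, f (Fin.last m)) : (Fin m → X) × X)) := by
        intro f g h
        obtain ⟨h1, h2⟩ := Prod.mk.injEq .. ▸ h
        funext j
        refine Fin.lastCases ?_ (fun i => ?_) j
        · exact h2
        · exact congrFun h1 i
      refine (Cardinal.mk_le_of_injective hinj).trans ?_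
      rw [Cardinal.mk_prod, Cardinal.lift_id, Cardinal.lift_id]
      calc #(Fin m → X) * #X ≤ θ * θ := mul_le_mul' ih hX
        _ = θ := by rw [Cardinal.mul_eq_max hθ hθ]; exact max_self θ

theorem mk_paramFormulaOver_le (A : Set M) :
    #(↥{f : ParamFormula L M 1 | f.paramsIn A}) ≤ theoryCard L ⊔ #(↥A) := by
  classical
  set θ : Cardinal.{u} := theoryCard L ⊔ #(↥A) with hθdef
  have hθ : ℵ₀ ≤ θ := le_trans aleph0_le_theoryCard le_sup_left
  set J : ↥{f : ParamFormula L M 1 | f.paramsIn A} →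
      Σ m : ℕ, L.Formula (Fin 1 ⊕ Fin m) × (Fin m → ↥A) := fun f =>
    ⟨f.1.m, f.1.toFormula, fun i => ⟨f.1.params i, f.2 i⟩⟩ with hJ
  have hinj : Function.Injective J := by
    rintro ⟨⟨m1, φ1, p1⟩, h1⟩ ⟨⟨m2, φ2, p2⟩, h2⟩ h
    rw [hJ] at h
    simp only at h
    obtain ⟨hm, hrest⟩ := Sigma.mk.inj_iff.1 h
    subst hm
    obtain ⟨hφ, hp⟩ := Prod.mk.injEq .. ▸ (eq_of_heq hrest)
    apply Subtype.ext
    simp only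
    congr 1
    funext i
    exact congrArg Subtype.val (congrFun hp i)
  refine (Cardinal.mk_le_of_injective hinj).trans ?_
  rw [Cardinal.mk_sigma]
  have hbound : ∀ m : ℕ, #(L.Formula (Fin 1 ⊕ Fin m) × (Fin m → ↥A)) ≤ θ := by
    intro m
    rw [Cardinal.mk_prod, Cardinal.lift_id, Cardinal.lift_id]
    calc #(L.Formula (Fin 1 ⊕ Fin m)) * #(Fin m → ↥A)
        ≤ θ * θ := mul_le_mul' (le_trans (mk_formula_le m) le_sup_left)
          (mk_tuple_le hθ le_sup_right m)
      _ = θ := by rw [Cardinal.mul_eq_max hθ hθ]; exact max_self θ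
  refine le_trans (Cardinal.sum_le_sum _ _ hbound) ?_
  rw [Cardinal.sum_const, Cardinal.lift_uzero, Cardinal.mk_nat, Cardinal.lift_aleph0,
    Cardinal.mul_eq_max le_rfl hθ]
  exact max_le hθ le_rfl

end Cardinality

section Index

variable {L : FirstOrder.Language.{u, u}} {M : Type u} [L.Structure M]

theorem exists_reps (D : DefGroup L M) (A : Set M) :
    ∃ S : Set M, S ⊆ D.carrier ∧ #(↥S) ≤ 2 ^ (theoryCard L ⊔ #(↥A)) ∧
      ∀ g ∈ D.carrier, ∃ s ∈ S, D.mul (D.inv s) g ∈ D.qSet {f | f.paramsIn A} 1 := by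
  classical
  set ΓT := {f : ParamFormula L M 1 | f.paramsIn A} with hΓT
  set tmap : M → Set ↥ΓT := fun g => {f | f.1.Realize fun _ => g} with htmap
  set R : Set (Set ↥ΓT) := tmap '' D.carrier with hR
  have hsec : ∀ r : ↥R, ∃ x, x ∈ D.carrier ∧ tmap x = r.1 := fun r => r.2
  set sec : ↥R → M := fun r => (hsec r).choose with hsecdef
  have hsecspec : ∀ r : ↥R, sec r ∈ D.carrier ∧ tmap (sec r) = r.1 := fun r =>
    (hsec r).choose_spec
  refine ⟨Set.range sec, ?_, ?_, ?_⟩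
  · rintro s ⟨r, rfl⟩
    exact (hsecspec r).1
  · refine le_trans Cardinal.mk_range_le ?_
    have h1 : #(↥R) ≤ #(Set ↥ΓT) := Cardinal.mk_le_of_injective Subtype.val_injective
    refine le_trans h1 ?_
    rw [Cardinal.mk_set]
    exact Cardinal.power_le_power_left (by norm_num) (mk_paramFormulaOver_le A)
  · intro g hg
    set r : ↥R := ⟨tmap g, Set.mem_image_of_mem tmap hg⟩ with hrdef
    refine ⟨sec r, Set.mem_range_self r, ?_⟩
    have hsame : tmap (sec r) = tmap g := (hsecspec r).2
    have hsc : sec r ∈ D.carrier := (hsecspec r).1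
    refine ⟨fun _ => (sec r, g), fun _ => ⟨hsc, hg⟩, ?_, ?_⟩
    · intro ℓ f hf
      have : (⟨f, hf⟩ : ↥ΓT) ∈ tmap (sec r) ↔ (⟨f, hf⟩ : ↥ΓT) ∈ tmap g := by
        rw [hsame]
      exact this
    · have hx : D.mul (D.inv (sec r)) g ∈ D.carrier :=
        D.mul_mem' _ (D.inv_mem' _ hsc) _ hg
      simp only [List.ofFn_succ, List.ofFn_zero, List.foldr_cons, List.foldr_nil]
      exact (D.mul_one' _ hx).symm

end Index
/-- Observation 1.7(4) of [Sh:886]: for any `ā ∈ ^α𝔠` with `α < κ̄`, the set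
`⋃_{k<ω} q^k_{ā}(𝔠)` is a union-type-definable subgroup of `G` of bounded index, in fact of
index at most `2^{|T|+|α|}`. -/
theorem observation_h12_4
    {L : FirstOrder.Language.{u, u}} {M : Type u} [L.Structure M]
    (κbar : Cardinal.{u}) (hκinacc : κbar.IsInaccessible) (hκT : theoryCard L < κbar)
    (hκsat : Saturated L M κbar)
    (D : DefGroup L M) (hAκ : #(D.AStar) < κbar)
    (α : Type u) (hα : #α < κbar) (abar : α → M) :
    D.IsSubgroup (⋃ k : ℕ, D.qTupleSet abar k) ∧
    UnionTypeDefinable L (⋃ k : ℕ, D.qTupleSet abar k) κbar ∧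
    D.indexLT (⋃ k : ℕ, D.qTupleSet abar k) κbar ∧
    D.indexLE (⋃ k : ℕ, D.qTupleSet abar k) (2 ^ (theoryCard L ⊔ #α)) := by
  classical
  obtain ⟨hℵκ, hreg, hslim⟩ := hκinacc
  obtain ⟨φmul, hmulP, hmul⟩ := D.mul_definable
  obtain ⟨φinv, hinvP, hinv⟩ := D.inv_definable
  obtain ⟨φone, honeP, hone⟩ := D.one_definable
  set A : Set M := Set.range abar with hAdef
  have hA : #(↥A) < κbar := lt_of_le_of_lt Cardinal.mk_range_le hα
  have hB : #(↥(D.AStar ∪ A)) < κbar :=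
    lt_of_le_of_lt (Cardinal.mk_union_le _ _) (Cardinal.add_lt_of_lt hℵκ.le hAκ hA)
  have hqt : ∀ n : ℕ, D.qTupleSet abar n = D.qSet {f | f.paramsIn A} n := fun n => rfl
  have hPn : ∀ n : ℕ, realizeSet (Pn φmul φinv φone D A n)
      = D.qSet {f | f.paramsIn A} n := fun n =>
    realizeSet_Pn φmul φinv φone D A hmul hinv hone hmulP hinvP honeP hκsat hℵκ hB n
  obtain ⟨S, hSsub, hScard, hScover⟩ := exists_reps D A
  have hcover : ∀ g ∈ D.carrier, ∃ s ∈ S,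
      D.mul (D.inv s) g ∈ ⋃ k : ℕ, D.qTupleSet abar k := by
    intro g hg
    obtain ⟨s, hs, hmem⟩ := hScover g hg
    exact ⟨s, hs, Set.mem_iUnion.2 ⟨1, by rw [hqt 1]; exact hmem⟩⟩
  refine ⟨?_, ?_, ?_, ?_⟩
  · exact D.isSubgroup_unionQSet (Γ := {f | f.paramsIn A})
  · refine ⟨D.AStar ∪ A, hB, ULift.{u} ℕ, ?_, fun i => Pn φmul φinv φone D A i.down,
      fun i => isTypeOver_Pn φmul φinv φone D A hmulP hinvP honeP i.down, ?_⟩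
    · rw [Cardinal.mk_uLift, Cardinal.mk_nat, Cardinal.lift_aleph0]
      exact hℵκ
    · apply Set.eq_of_subset_of_subset
      · intro x hx
        obtain ⟨k, hk⟩ := Set.mem_iUnion.1 hx
        refine Set.mem_iUnion.2 ⟨ULift.up k, ?_⟩
        rw [hPn k]
        rw [hqt k] at hk
        exact hk
      · intro x hx
        obtain ⟨i, hi⟩ := Set.mem_iUnion.1 hx
        rw [hPn i.down] at hi
        refine Set.mem_iUnion.2 ⟨i.down, ?_⟩
        rw [hqt i.down]
        exact hi
  · exact ⟨S, hSsub, lt_of_le_of_lt hScard (hslim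
      (max_lt hκT hA)), hcover⟩
  · refine ⟨S, hSsub, le_trans hScard ?_, hcover⟩
    exact Cardinal.power_le_power_left (by norm_num)
      (max_le_max le_rfl Cardinal.mk_range_le)

end Paper886
end

section
/- If H is a subgroup of G of bounded index which is type-definable over ā, where ā ∈ ^α𝔠 and α < κ̄, then (G:H) ≤ 2^{|T|+|α|}. -/
open FirstOrder Cardinal Set

universe u

namespace Paper886

variable {L : FirstOrder.Language.{u, u}} {M : Type u} [L.Structure M]

section AuxGroup

variable {L : FirstOrder.Language.{u, u}} {M : Type u} [L.Structure M]

namespace DefGroup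

variable (D : DefGroup L M)

theorem eq_inv_aux {a b : M} (ha : a ∈ D.carrier) (hb : b ∈ D.carrier)
    (h : D.mul a b = D.one) : b = D.inv a := by
  have hia : D.inv a ∈ D.carrier := D.inv_mem' a ha
  have h1 : D.mul (D.inv a) (D.mul a b) = D.mul (D.inv a) D.one := by rw [h]
  rw [← D.mul_assoc' (D.inv a) hia a ha b hb, D.inv_mul' a ha, D.one_mul' b hb,
    D.mul_one' (D.inv a) hia] at h1
  exact h1

theorem mul_inv_rev_aux {a b : M} (ha : a ∈ D.carrier) (hb : b ∈ D.carrier) :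
    D.inv (D.mul a b) = D.mul (D.inv b) (D.inv a) := by
  have hia : D.inv a ∈ D.carrier := D.inv_mem' a ha
  have hib : D.inv b ∈ D.carrier := D.inv_mem' b hb
  have hab : D.mul a b ∈ D.carrier := D.mul_mem' a ha b hb
  have hbi : D.mul (D.inv b) (D.inv a) ∈ D.carrier := D.mul_mem' _ hib _ hia
  refine (D.eq_inv_aux hab hbi ?_).symm
  have h1 : D.mul b (D.mul (D.inv b) (D.inv a)) = D.inv a := by
    rw [← D.mul_assoc' b hb (D.inv b) hib (D.inv a) hia, D.mul_inv' b hb,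
      D.one_mul' (D.inv a) hia]
  rw [D.mul_assoc' a ha b hb (D.mul (D.inv b) (D.inv a)) hbi, h1, D.mul_inv' a ha]

theorem inv_inv_aux {a : M} (ha : a ∈ D.carrier) : D.inv (D.inv a) = a :=
  (D.eq_inv_aux (D.inv_mem' a ha) ha (D.inv_mul' a ha)).symm

/-- Symmetry of the coset relation. -/
theorem coset_symm {H : Set M} (hH : D.IsSubgroup H) {x y : M}
    (hx : x ∈ D.carrier) (hy : y ∈ D.carrier) (h : D.mul (D.inv x) y ∈ H) :
    D.mul (D.inv y) x ∈ H := by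
  have hix : D.inv x ∈ D.carrier := D.inv_mem' x hx
  have key : D.inv (D.mul (D.inv x) y) = D.mul (D.inv y) x := by
    rw [D.mul_inv_rev_aux hix hy, D.inv_inv_aux hx]
  have := hH.2.2.2 _ h
  rwa [key] at this

/-- Transitivity of the coset relation. -/
theorem coset_trans {H : Set M} (hH : D.IsSubgroup H) {s x y : M}
    (hs : s ∈ D.carrier) (hx : x ∈ D.carrier) (hy : y ∈ D.carrier)
    (hsx : D.mul (D.inv s) x ∈ H) (hsy : D.mul (D.inv s) y ∈ H) :
    D.mul (D.inv x) y ∈ H := by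
  have his : D.inv s ∈ D.carrier := D.inv_mem' s hs
  have hix : D.inv x ∈ D.carrier := D.inv_mem' x hx
  have hu : D.mul (D.inv s) x ∈ D.carrier := D.mul_mem' _ his _ hx
  have hv : D.mul (D.inv s) y ∈ D.carrier := D.mul_mem' _ his _ hy
  have hinvu : D.inv (D.mul (D.inv s) x) ∈ H := hH.2.2.2 _ hsx
  have hkey : D.mul (D.inv (D.mul (D.inv s) x)) (D.mul (D.inv s) y) = D.mul (D.inv x) y := by
    rw [D.mul_inv_rev_aux his hx, D.inv_inv_aux hs]
    rw [D.mul_assoc' (D.inv x) hix s hs (D.mul (D.inv s) y) hv]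
    rw [← D.mul_assoc' s hs (D.inv s) his y hy, D.mul_inv' s hs, D.one_mul' y hy]
  have := hH.2.2.1 _ hinvu _ hsy
  rwa [hkey] at this

/-- Reflexivity of the coset relation. -/
theorem coset_refl {H : Set M} (hH : D.IsSubgroup H) {x : M} (hx : x ∈ D.carrier) :
    D.mul (D.inv x) x ∈ H := by
  rw [D.inv_mul' x hx]
  exact hH.2.1

end DefGroup

/-- The negation of a parametrized formula. -/
def ParamFormula.pnot {n : ℕ} (f : ParamFormula L M n) : ParamFormula L M n :=
  ⟨f.m, f.toFormula.not, f.params⟩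

theorem ParamFormula.realize_pnot {n : ℕ} (f : ParamFormula L M n) (v : Fin n → M) :
    f.pnot.Realize v ↔ ¬ f.Realize v :=
  Language.Formula.realize_not

theorem ParamFormula.pnot_paramsIn {n : ℕ} (f : ParamFormula L M n) {B : Set M}
    (h : f.paramsIn B) : f.pnot.paramsIn B := h

/-- Counting formulas over a fixed finite tuple of variables. -/
theorem card_formula_le (n' m : ℕ) :
    #(L.Formula (Fin n' ⊕ Fin m)) ≤ theoryCard L := by
  have h1 : #(L.Formula (Fin n' ⊕ Fin m)) ≤ #(Σ n, L.BoundedFormula (Fin n' ⊕ Fin m) n) :=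
    Cardinal.mk_le_of_injective (f := Sigma.mk 0) sigma_mk_injective
  refine h1.trans ((Language.BoundedFormula.card_le).trans ?_)
  have h2 : Cardinal.lift.{u} #(Fin n' ⊕ Fin m) ≤ ℵ₀ := by
    refine le_of_lt ?_
    rw [Cardinal.lift_lt_aleph0]
    exact Cardinal.lt_aleph0_of_finite _
  have h3 : Cardinal.lift.{u} #(Fin n' ⊕ Fin m) + Cardinal.lift.{0} L.card ≤ theoryCard L := by
    rw [Cardinal.lift_uzero]
    calc Cardinal.lift.{u} #(Fin n' ⊕ Fin m) + L.card ≤ theoryCard L + theoryCard L :=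
          add_le_add (h2.trans le_sup_left) le_sup_right
      _ = theoryCard L := Cardinal.add_eq_self (le_sup_left)
  exact max_le (le_sup_left) h3

/-- Counting parametrized formulas with parameters in `B`. -/
theorem card_paramFormula_le (B : Set M) :
    #{f : ParamFormula L M 1 // f.paramsIn B} ≤ theoryCard L ⊔ #B := by
  classical
  have hinf : ℵ₀ ≤ theoryCard L ⊔ #B := le_sup_of_le_left le_sup_left
  let Tg := Σ m : ULift.{u} ℕ, L.Formula (Fin 1 ⊕ Fin m.down) × (Fin m.down → ↥B)
  have hinj : ∃ J : {f : ParamFormula L M 1 // f.paramsIn B} → Tg, Function.Injective J := by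
    refine ⟨fun f => ⟨⟨f.1.m⟩, f.1.toFormula, fun i => ⟨f.1.params i, f.2 i⟩⟩, ?_⟩
    rintro ⟨⟨m1, F1, p1⟩, hpf1⟩ ⟨⟨m2, F2, p2⟩, hpf2⟩ h
    apply Subtype.ext
    injection h with h1 h2
    injection h1 with h1
    subst h1
    rw [heq_eq_eq, Prod.mk.injEq] at h2
    obtain ⟨hF, hp⟩ := h2
    subst hF
    have hp' : p1 = p2 := funext fun i => congrArg Subtype.val (congrFun hp i)
    subst hp'
    rfl
  obtain ⟨J, hJ⟩ := hinj
  refine (Cardinal.mk_le_of_injective hJ).trans ?_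
  rw [Cardinal.mk_sigma]
  have hbound : ∀ m : ULift.{u} ℕ,
      #(L.Formula (Fin 1 ⊕ Fin m.down) × (Fin m.down → ↥B)) ≤ theoryCard L ⊔ #B := by
    intro m
    rw [Cardinal.mk_prod]
    simp only [Cardinal.lift_id]
    have hf : #(L.Formula (Fin 1 ⊕ Fin m.down)) ≤ theoryCard L ⊔ #B :=
      (card_formula_le 1 m.down).trans le_sup_left
    have hp : #(Fin m.down → ↥B) ≤ theoryCard L ⊔ #B := by
      have harr : #(Fin m.down → ↥B) = (#↥B) ^ (m.down : Cardinal.{u}) := by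
        rw [Cardinal.mk_arrow]
        simp
      rw [harr]
      calc (#↥B) ^ (m.down : Cardinal.{u}) ≤ (theoryCard L ⊔ #B) ^ (m.down : Cardinal.{u}) :=
            Cardinal.power_le_power_right le_sup_right
        _ ≤ theoryCard L ⊔ #B := Cardinal.power_nat_le hinf
    calc #(L.Formula (Fin 1 ⊕ Fin m.down)) * #(Fin m.down → ↥B)
        ≤ (theoryCard L ⊔ #B) * (theoryCard L ⊔ #B) := mul_le_mul' hf hp
      _ = theoryCard L ⊔ #B := Cardinal.mul_eq_self hinf
  calc (Cardinal.sum fun m : ULift.{u} ℕ =>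
        #(L.Formula (Fin 1 ⊕ Fin m.down) × (Fin m.down → ↥B)))
      ≤ Cardinal.sum (fun _ : ULift.{u} ℕ => theoryCard L ⊔ #B) := Cardinal.sum_le_sum _ _ hbound
    _ = #(ULift.{u} ℕ) * (theoryCard L ⊔ #B) := by rw [Cardinal.sum_const']
    _ = ℵ₀ * (theoryCard L ⊔ #B) := by rw [Cardinal.mk_uLift, Cardinal.mk_nat]; simp
    _ = theoryCard L ⊔ #B := by
        rw [Cardinal.mul_eq_max le_rfl hinf]
        exact max_eq_right hinf

end AuxGroup
section Theta

variable {L : FirstOrder.Language.{u, u}} {M : Type u} [L.Structure M]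

/-- Turn a two-variable formula with parameters into a one-variable parametrized formula
by substituting a fixed element for the second variable. -/
theorem exists_fix_snd {mP : ℕ} (Θ : L.Formula (Fin 2 ⊕ Fin mP)) (pv : Fin mP → M) (b : M) :
    ∃ θ : ParamFormula L M 1, (∀ i, θ.params i ∈ insert b (Set.range pv)) ∧
      ∀ a : M, ((θ.Realize fun _ => a) ↔ Θ.Realize (Sum.elim ![a, b] pv)) := by
  classical
  refine ⟨⟨mP + 1, Θ.relabel (Sum.elim (![Sum.inl 0, Sum.inr (Fin.last mP)])
      (fun i => Sum.inr i.castSucc)), Fin.snoc pv b⟩, ?_, ?_⟩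
  · intro i
    show (Fin.snoc pv b : Fin (mP + 1) → M) i ∈ insert b (Set.range pv)
    refine Fin.lastCases ?_ ?_ i
    · rw [Fin.snoc_last]; exact Set.mem_insert _ _
    · intro j
      rw [Fin.snoc_castSucc]
      exact Set.mem_insert_of_mem _ ⟨j, rfl⟩
  · intro a
    show (Θ.relabel _).Realize (Sum.elim (fun _ => a) (Fin.snoc pv b)) ↔ _
    rw [FirstOrder.Language.Formula.realize_relabel]
    apply iff_of_eq; congr 1
    funext z
    rcases z with j | i
    · fin_cases j
      · simp
      · simp
    · simp

/-- Turn a two-variable formula with parameters into a one-variable parametrized formula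
by substituting a fixed element for the first variable. -/
theorem exists_fix_fst {mP : ℕ} (Θ : L.Formula (Fin 2 ⊕ Fin mP)) (pv : Fin mP → M) (b : M) :
    ∃ θ : ParamFormula L M 1, (∀ i, θ.params i ∈ insert b (Set.range pv)) ∧
      ∀ a : M, ((θ.Realize fun _ => a) ↔ Θ.Realize (Sum.elim ![b, a] pv)) := by
  classical
  refine ⟨⟨mP + 1, Θ.relabel (Sum.elim (![Sum.inr (Fin.last mP), Sum.inl 0])
      (fun i => Sum.inr i.castSucc)), Fin.snoc pv b⟩, ?_, ?_⟩
  · intro i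
    show (Fin.snoc pv b : Fin (mP + 1) → M) i ∈ insert b (Set.range pv)
    refine Fin.lastCases ?_ ?_ i
    · rw [Fin.snoc_last]; exact Set.mem_insert _ _
    · intro j
      rw [Fin.snoc_castSucc]
      exact Set.mem_insert_of_mem _ ⟨j, rfl⟩
  · intro a
    show (Θ.relabel _).Realize (Sum.elim (fun _ => a) (Fin.snoc pv b)) ↔ _
    rw [FirstOrder.Language.Formula.realize_relabel]
    apply iff_of_eq; congr 1
    funext z
    rcases z with j | i
    · fin_cases j
      · simp
      · simp
    · simp

/-- The formula expressing, for `x, y ∈ G`, that `ψ(x⁻¹ · y) ∧ ψ(y⁻¹ · x)`. -/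
theorem exists_theta (D : DefGroup L M) (invφ : ParamFormula L M 2) (mulφ : ParamFormula L M 3)
    (ψ : ParamFormula L M 1)
    (hinvR : ∀ x y : M, (invφ.Realize ![x, y] ↔ D.inv x = y))
    (hmulR : ∀ x y z : M, (mulφ.Realize ![x, y, z] ↔ D.mul x y = z)) :
    ∃ (mP : ℕ) (Θ : L.Formula (Fin 2 ⊕ Fin mP)) (pv : Fin mP → M),
      (∀ i, pv i ∈ Set.range invφ.params ∪ Set.range mulφ.params ∪ Set.range ψ.params) ∧
      ∀ x y : M, (Θ.Realize (Sum.elim ![x, y] pv) ↔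
        ((ψ.Realize fun _ => D.mul (D.inv x) y) ∧ (ψ.Realize fun _ => D.mul (D.inv y) x))) := by
  classical
  let P3 := Fin invφ.m ⊕ (Fin mulφ.m ⊕ Fin ψ.m)
  let A := (Fin 2 ⊕ P3) ⊕ Fin 4
  let r1 : Fin 2 ⊕ Fin invφ.m → A := Sum.elim
    (![Sum.inl (Sum.inl 0), Sum.inr 0]) (fun i => Sum.inl (Sum.inr (Sum.inl i)))
  let r2 : Fin 3 ⊕ Fin mulφ.m → A := Sum.elim
    (![Sum.inr 0, Sum.inl (Sum.inl 1), Sum.inr 1])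
    (fun i => Sum.inl (Sum.inr (Sum.inr (Sum.inl i))))
  let r3 : Fin 1 ⊕ Fin ψ.m → A := Sum.elim
    (![Sum.inr 1]) (fun i => Sum.inl (Sum.inr (Sum.inr (Sum.inr i))))
  let r4 : Fin 2 ⊕ Fin invφ.m → A := Sum.elim
    (![Sum.inl (Sum.inl 1), Sum.inr 2]) (fun i => Sum.inl (Sum.inr (Sum.inl i)))
  let r5 : Fin 3 ⊕ Fin mulφ.m → A := Sum.elim
    (![Sum.inr 2, Sum.inl (Sum.inl 0), Sum.inr 3])
    (fun i => Sum.inl (Sum.inr (Sum.inr (Sum.inl i))))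
  let r6 : Fin 1 ⊕ Fin ψ.m → A := Sum.elim
    (![Sum.inr 3]) (fun i => Sum.inl (Sum.inr (Sum.inr (Sum.inr i))))
  let base : L.Formula A :=
    (invφ.toFormula.relabel r1) ⊓ ((mulφ.toFormula.relabel r2) ⊓ ((ψ.toFormula.relabel r3) ⊓
      ((invφ.toFormula.relabel r4) ⊓ ((mulφ.toFormula.relabel r5) ⊓ (ψ.toFormula.relabel r6)))))
  let Θ' : L.Formula (Fin 2 ⊕ P3) := base.iExs (Fin 4)
  let pvec : P3 → M := Sum.elim invφ.params (Sum.elim mulφ.params ψ.params)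
  have hΘ' : ∀ x y : M, (Θ'.Realize (Sum.elim ![x, y] pvec) ↔
      ((ψ.Realize fun _ => D.mul (D.inv x) y) ∧ (ψ.Realize fun _ => D.mul (D.inv y) x))) := by
    intro x y
    rw [show Θ' = base.iExs (Fin 4) from rfl, FirstOrder.Language.Formula.realize_iExs]
    have hcomp : ∀ zs : Fin 4 → M,
        ((fun a => Sum.elim (Sum.elim ![x, y] pvec) zs (id a)) ∘ r1)
          = Sum.elim ![x, zs 0] invφ.params ∧
        ((fun a => Sum.elim (Sum.elim ![x, y] pvec) zs (id a)) ∘ r2)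
          = Sum.elim ![zs 0, y, zs 1] mulφ.params ∧
        ((fun a => Sum.elim (Sum.elim ![x, y] pvec) zs (id a)) ∘ r3)
          = Sum.elim (fun _ => zs 1) ψ.params ∧
        ((fun a => Sum.elim (Sum.elim ![x, y] pvec) zs (id a)) ∘ r4)
          = Sum.elim ![y, zs 2] invφ.params ∧
        ((fun a => Sum.elim (Sum.elim ![x, y] pvec) zs (id a)) ∘ r5)
          = Sum.elim ![zs 2, x, zs 3] mulφ.params ∧
        ((fun a => Sum.elim (Sum.elim ![x, y] pvec) zs (id a)) ∘ r6)
          = Sum.elim (fun _ => zs 3) ψ.params := by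
      intro zs
      refine ⟨?_, ?_, ?_, ?_, ?_, ?_⟩ <;>
        · funext z
          rcases z with j | i
          · fin_cases j <;> simp [r1, r2, r3, r4, r5, r6, pvec]
          · simp [r1, r2, r3, r4, r5, r6, pvec]
    have hreal : ∀ zs : Fin 4 → M,
        ((base.Realize (fun a => Sum.elim (Sum.elim ![x, y] pvec) zs (id a)) : Prop) ↔
        ((invφ.Realize ![x, zs 0]) ∧ (mulφ.Realize ![zs 0, y, zs 1]) ∧
         (ψ.Realize fun _ => zs 1) ∧ (invφ.Realize ![y, zs 2]) ∧
         (mulφ.Realize ![zs 2, x, zs 3]) ∧ (ψ.Realize fun _ => zs 3))) := by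
      intro zs
      obtain ⟨hc1, hc2, hc3, hc4, hc5, hc6⟩ := hcomp zs
      show ((invφ.toFormula.relabel r1) ⊓ _).Realize _ ↔ _
      simp only [FirstOrder.Language.Formula.realize_inf,
        FirstOrder.Language.Formula.realize_relabel]
      rw [hc1, hc2, hc3, hc4, hc5, hc6]
      exact Iff.rfl
    constructor
    · rintro ⟨zs, hzs⟩
      replace hzs := (hreal zs).1 hzs
      obtain ⟨h1, h2, h3, h4, h5, h6⟩ := hzs
      rw [hinvR] at h1 h4
      rw [hmulR] at h2 h5
      have e1 : zs 1 = D.mul (D.inv x) y := by rw [← h2, ← h1]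
      have e2 : zs 3 = D.mul (D.inv y) x := by rw [← h5, ← h4]
      constructor
      · rw [← e1]; exact h3
      · rw [← e2]; exact h6
    · rintro ⟨hA, hB⟩
      refine ⟨![D.inv x, D.mul (D.inv x) y, D.inv y, D.mul (D.inv y) x], ?_⟩
      refine (hreal _).2 ?_
      refine ⟨?_, ?_, ?_, ?_, ?_, ?_⟩
      · rw [hinvR]; simp
      · rw [hmulR]; simp
      · simpa using hA
      · rw [hinvR]; simp
      · rw [hmulR]; simp
      · simpa using hB
  let e3 : P3 ≃ Fin (invφ.m + (mulφ.m + ψ.m)) :=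
    (Equiv.sumCongr (Equiv.refl (Fin invφ.m)) finSumFinEquiv).trans finSumFinEquiv
  refine ⟨invφ.m + (mulφ.m + ψ.m), Θ'.relabel (Sum.map id e3), pvec ∘ e3.symm, ?_, ?_⟩
  · intro i
    rcases h : e3.symm i with a | b | c
    · show pvec (e3.symm i) ∈ _
      rw [h]
      exact Or.inl (Or.inl ⟨a, rfl⟩)
    · show pvec (e3.symm i) ∈ _
      rw [h]
      exact Or.inl (Or.inr ⟨b, rfl⟩)
    · show pvec (e3.symm i) ∈ _
      rw [h]
      exact Or.inr ⟨c, rfl⟩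
  · intro x y
    rw [FirstOrder.Language.Formula.realize_relabel]
    have hco : ((Sum.elim ![x, y] (pvec ∘ e3.symm)) ∘ (Sum.map id e3)) = Sum.elim ![x, y] pvec := by
      funext z
      rcases z with j | p
      · rfl
      · show pvec (e3.symm (e3 p)) = pvec p
        rw [Equiv.symm_apply_apply]
    rw [hco]
    exact hΘ' x y

end Theta
section ER
open Ordinal


private noncomputable def ti (o : Ordinal.{u}) (j : o.ToType) : Ordinal.{u} :=
  @Ordinal.typein o.ToType (· < ·) isWellOrder_lt j

private theorem ti_lt_self (o : Ordinal.{u}) (j : o.ToType) : ti o j < o :=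
  typein_lt_self j

private theorem ti_surj (o : Ordinal.{u}) {o' : Ordinal.{u}} (h : o' < o) :
    ∃ j : o.ToType, ti o j = o' := by
  refine @Ordinal.typein_surj o.ToType (· < ·) isWellOrder_lt o' ?_
  rwa [type_toType]

theorem exists_rec_fn {β : Type*} {N : Sort*} [LT β]
    (wf : WellFounded ((· < ·) : β → β → Prop))
    (P : (i : β) → ((j : β) → j < i → N) → N → Prop)
    (hex : ∀ i g, ∃ x, P i g x) :
    ∃ a : β → N, ∀ i : β, P i (fun j _ => a j) (a i) := by
  let F : β → N := wf.fix (fun i rec => (hex i rec).choose)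
  have hF : ∀ i, F i = (hex i (fun j _ => F j)).choose := fun i => wf.fix_eq _ i
  refine ⟨F, fun i => ?_⟩
  have h := (hex i (fun j _ => F j)).choose_spec
  rwa [← hF i] at h

theorem erdos_rado_pairs {X C : Type u} {lam : Cardinal.{u}} (hlam : ℵ₀ ≤ lam)
    [Nonempty X] [Nonempty C]
    (hC : #C ≤ lam) (hX : 2 ^ lam < #X) (f : X → X → C) :
    ∃ (c₀ : C) (w : ℕ → X), Function.Injective w ∧
      ∀ k l : ℕ, k ≠ l → f (w k) (w l) = c₀ ∨ f (w l) (w k) = c₀ := by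
  classical
  have hlam2 : ℵ₀ ≤ 2 ^ lam := hlam.trans (cantor lam).le
  have hΛcard : #(lam.ord.ToType) = lam := by rw [Cardinal.mk_toType, Cardinal.card_ord]
  -- witness function
  let wit : Set X → (lam.ord.ToType → Option X) → (lam.ord.ToType → C) → X := fun Y g φ =>
    if h : ∃ x : X, x ∉ Y ∧ ∀ ξ y, g ξ = some y → f y x = φ ξ then h.choose
    else Classical.arbitrary X
  let cl : Set X → Set X := fun Y =>
    Y ∪ Set.range (fun gφ : (lam.ord.ToType → Option ↥Y) × (lam.ord.ToType → C) =>
      wit Y (fun ξ => (gφ.1 ξ).map Subtype.val) gφ.2)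
  have hclcard : ∀ Y : Set X, #Y ≤ 2 ^ lam → #(cl Y) ≤ 2 ^ lam := by
    intro Y hY
    refine (mk_union_le _ _).trans ?_
    have h1 : #(lam.ord.ToType → Option ↥Y) ≤ 2 ^ lam := by
      rw [Cardinal.mk_arrow]
      simp only [Cardinal.lift_id]
      rw [Cardinal.mk_option, hΛcard]
      calc (#Y + 1) ^ lam ≤ (2 ^ lam) ^ lam := by
            refine Cardinal.power_le_power_right ?_
            calc #Y + 1 ≤ 2 ^ lam + 2 ^ lam :=
                  add_le_add hY (Cardinal.one_le_aleph0.trans hlam2)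
              _ = 2 ^ lam := Cardinal.add_eq_self hlam2
        _ = 2 ^ (lam * lam) := by rw [← Cardinal.power_mul]
        _ = 2 ^ lam := by rw [Cardinal.mul_eq_self hlam]
    have h2 : #(lam.ord.ToType → C) ≤ 2 ^ lam := by
      rw [Cardinal.mk_arrow]
      simp only [Cardinal.lift_id]
      rw [hΛcard]
      calc #C ^ lam ≤ (2 ^ lam) ^ lam := Cardinal.power_le_power_right (hC.trans (cantor lam).le)
        _ = 2 ^ (lam * lam) := by rw [← Cardinal.power_mul]
        _ = 2 ^ lam := by rw [Cardinal.mul_eq_self hlam]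
    have h3 : #(Set.range (fun gφ : (lam.ord.ToType → Option ↥Y) × (lam.ord.ToType → C) =>
        wit Y (fun ξ => (gφ.1 ξ).map Subtype.val) gφ.2)) ≤ 2 ^ lam := by
      refine mk_range_le.trans ?_
      rw [Cardinal.mk_prod]
      simp only [Cardinal.lift_id]
      calc #(lam.ord.ToType → Option ↥Y) * #(lam.ord.ToType → C)
          ≤ 2 ^ lam * 2 ^ lam := mul_le_mul' h1 h2
        _ = 2 ^ lam := Cardinal.mul_eq_self hlam2
    calc #Y + _ ≤ 2 ^ lam + 2 ^ lam := add_le_add hY h3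
      _ = 2 ^ lam := Cardinal.add_eq_self hlam2
  -- iterate cl through the ordinals
  let F : Ordinal.{u} → Set X := Ordinal.lt_wf.fix
    (fun o rec => ⋃ j : o.ToType, cl (rec (ti o j) (ti_lt_self o j)))
  have hFeq : ∀ o, F o = ⋃ j : o.ToType, cl (F (ti o j)) := fun o =>
    Ordinal.lt_wf.fix_eq _ o
  have hclF : ∀ o o' : Ordinal.{u}, o' < o → cl (F o') ⊆ F o := by
    intro o o' h
    obtain ⟨j, hj⟩ := ti_surj o h
    rw [hFeq o]
    exact hj ▸ subset_iUnion (fun j : o.ToType => cl (F (ti o j))) j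
  have hFmono : ∀ o o' : Ordinal.{u}, o' ≤ o → F o' ⊆ F o := by
    intro o o' h
    rw [hFeq o']
    refine iUnion_subset fun j => ?_
    exact hclF o _ ((ti_lt_self o' j).trans_le h)
  have hFcard : ∀ o : Ordinal.{u}, o.card ≤ 2 ^ lam → #(F o) ≤ 2 ^ lam := by
    intro o
    induction o using Ordinal.induction with
    | h o IH =>
      intro hcard
      rw [hFeq o]
      rcases isEmpty_or_nonempty o.ToType with he | hne
      · rw [iUnion_of_empty]
        simp
      · refine (Cardinal.mk_iUnion_le _).trans ?_
        have hsup : ⨆ j : o.ToType, #(cl (F (ti o j))) ≤ 2 ^ lam := by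
          refine ciSup_le' fun j => ?_
          refine hclcard _ (IH _ (ti_lt_self o j) ?_)
          exact le_trans (Ordinal.card_le_card (ti_lt_self o j).le) hcard
        calc #o.ToType * ⨆ j : o.ToType, #(cl (F (ti o j)))
            ≤ (2 ^ lam) * (2 ^ lam) := by
              refine mul_le_mul' ?_ hsup
              rw [Cardinal.mk_toType]; exact hcard
          _ = 2 ^ lam := Cardinal.mul_eq_self hlam2
  have hνinf : ℵ₀ ≤ Order.succ lam := hlam.trans (Order.le_succ _)
  have hν2 : Order.succ lam ≤ 2 ^ lam := Order.succ_le_of_lt (cantor lam)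
  have hX'card : #(F (Order.succ lam).ord) ≤ 2 ^ lam :=
    hFcard _ (by rw [Cardinal.card_ord]; exact hν2)
  obtain ⟨berd, hberd⟩ : ∃ b : X, b ∉ F (Order.succ lam).ord := by
    by_contra hno
    push_neg at hno
    have hsub : (univ : Set X) ⊆ F (Order.succ lam).ord := fun x _ => hno x
    have hle := (Cardinal.mk_le_mk_of_subset hsub).trans hX'card
    rw [Cardinal.mk_univ] at hle
    exact absurd (hX.trans_le hle) (lt_irrefl _)
  have hβcard : #((Order.succ lam).ord.ToType) = Order.succ lam := by
    rw [Cardinal.mk_toType, Cardinal.card_ord]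
  have hIio : ∀ i : (Order.succ lam).ord.ToType, #{j // j < i} ≤ lam := by
    intro i
    have h2 : #(Iio i) < Order.succ lam := Cardinal.mk_Iio_ord_toType i
    exact Order.lt_succ_iff.1 h2
  have hwfβ : WellFounded ((· < ·) : (Order.succ lam).ord.ToType →
      (Order.succ lam).ord.ToType → Prop) := IsWellFounded.wf
  obtain ⟨a, ha⟩ := exists_rec_fn (N := ↥(F (Order.succ lam).ord)) hwfβ
    (fun i g x => ∀ j (hj : j < i),
      (g j hj).1 ≠ x.1 ∧ f (g j hj).1 x.1 = f (g j hj).1 berd)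
    (by
      intro i g
      have hv : ∀ jp : {j // j < i}, ∃ o' : Ordinal.{u}, o' < (Order.succ lam).ord ∧
          (g jp.1 jp.2).1 ∈ cl (F o') := by
        intro jp
        have h2 := (hFeq (Order.succ lam).ord).subset (g jp.1 jp.2).2
        simp only [mem_iUnion] at h2
        obtain ⟨j, hmem⟩ := h2
        exact ⟨ti _ j, ti_lt_self _ j, hmem⟩
      choose ovals holt hmem using hv
      have hcof : #{j // j < i} < (Order.succ lam).ord.cof := by
        rw [(Cardinal.isRegular_succ hlam).cof_eq]
        exact (hIio i).trans_lt (Order.lt_succ _)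
      have hostar : (⨆ jp, (ovals jp + 1)) < (Order.succ lam).ord :=
        Ordinal.iSup_lt_ord hcof fun jp =>
          (Cardinal.isSuccLimit_ord hνinf).succ_lt (holt jp)
      have hA : ∀ jp : {j // j < i}, (g jp.1 jp.2).1 ∈ F (⨆ jp, (ovals jp + 1)) := by
        intro jp
        have h1 : cl (F (ovals jp)) ⊆ F (ovals jp + 1) :=
          hclF _ _ (Order.lt_succ _)
        have h2 : F (ovals jp + 1) ⊆ F (⨆ jp, (ovals jp + 1)) :=
          hFmono _ _ (Ordinal.le_iSup _ jp)
        exact h2 (h1 (hmem jp))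
      have hemb : Nonempty ({j // j < i} ↪ lam.ord.ToType) := by
        rw [← Cardinal.le_def, hΛcard]
        exact hIio i
      obtain ⟨e⟩ := hemb
      let gE : lam.ord.ToType → Option ↥(F (⨆ jp, (ovals jp + 1))) := fun ξ =>
        if h : ∃ jp, e jp = ξ then some ⟨(g h.choose.1 h.choose.2).1, hA h.choose⟩ else none
      let φE : lam.ord.ToType → C := fun ξ =>
        (gE ξ).elim (Classical.arbitrary C) (fun y => f y.1 berd)
      have hFsubX' : F (⨆ jp, (ovals jp + 1)) ⊆ F (Order.succ lam).ord :=
        hFmono _ _ hostar.le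
      have hbnotin : berd ∉ F (⨆ jp, (ovals jp + 1)) := fun h => hberd (hFsubX' h)
      have hwitex : ∃ x : X, x ∉ F (⨆ jp, (ovals jp + 1)) ∧
          ∀ ξ y, ((gE ξ).map Subtype.val) = some y → f y x = φE ξ := by
        refine ⟨berd, hbnotin, fun ξ y hy => ?_⟩
        cases hgE : gE ξ with
        | none => rw [hgE] at hy; simp at hy
        | some z =>
          rw [hgE] at hy
          simp only [Option.map_some] at hy
          cases hy
          simp only [φE, hgE, Option.elim]
      have hxspec : wit (F (⨆ jp, (ovals jp + 1))) (fun ξ => (gE ξ).map Subtype.val) φE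
            ∉ F (⨆ jp, (ovals jp + 1)) ∧
          ∀ ξ y, ((gE ξ).map Subtype.val) = some y →
            f y (wit (F (⨆ jp, (ovals jp + 1))) (fun ξ => (gE ξ).map Subtype.val) φE) = φE ξ := by
        simp only [wit, dif_pos hwitex]
        exact hwitex.choose_spec
      have hxX' : wit (F (⨆ jp, (ovals jp + 1))) (fun ξ => (gE ξ).map Subtype.val) φE
          ∈ F (Order.succ lam).ord := by
        have hmemcl : wit (F (⨆ jp, (ovals jp + 1))) (fun ξ => (gE ξ).map Subtype.val) φE
            ∈ cl (F (⨆ jp, (ovals jp + 1))) :=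
          Set.mem_union_right _ ⟨(gE, φE), rfl⟩
        exact hclF _ _ hostar hmemcl
      refine ⟨⟨_, hxX'⟩, fun j hj => ?_⟩
      constructor
      · intro hEq
        have hEq' : (g j hj).1 = wit (F (⨆ jp, (ovals jp + 1)))
            (fun ξ => (gE ξ).map Subtype.val) φE := hEq
        exact hxspec.1 (hEq' ▸ hA ⟨j, hj⟩)
      · have hξ : gE (e ⟨j, hj⟩) = some ⟨(g j hj).1, hA ⟨j, hj⟩⟩ := by
          have hex' : ∃ jp, e jp = e ⟨j, hj⟩ := ⟨⟨j, hj⟩, rfl⟩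
          simp only [gE, dif_pos hex']
          have hc : hex'.choose = ⟨j, hj⟩ := e.injective hex'.choose_spec
          rw [hc]
        have hp := hxspec.2 (e ⟨j, hj⟩) (g j hj).1 (by rw [hξ]; rfl)
        rw [hp]
        simp only [φE, hξ, Option.elim])
  -- pigeonhole: an infinite fiber
  obtain ⟨c₀, hc₀⟩ : ∃ c : C, {j | f (a j).1 berd = c}.Infinite := by
    by_contra hno
    push_neg at hno
    have hcover : (univ : Set ((Order.succ lam).ord.ToType)) =
        ⋃ c : C, {j | f (a j).1 berd = c} := by
      ext j; simp only [mem_univ, mem_iUnion, mem_setOf_eq, true_iff]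
      exact ⟨_, rfl⟩
    have hle : #(univ : Set ((Order.succ lam).ord.ToType)) ≤
        #C * ⨆ c : C, #({j | f (a j).1 berd = c}) := by
      rw [hcover]; exact Cardinal.mk_iUnion_le _
    rw [Cardinal.mk_univ, hβcard] at hle
    have hbound : #C * ⨆ c : C, #({j | f (a j).1 berd = c}) ≤ lam * ℵ₀ :=
      mul_le_mul' hC (ciSup_le' fun c => ((hno c).lt_aleph0).le)
    have hfin : Order.succ lam ≤ lam := by
      refine (hle.trans hbound).trans ?_
      calc lam * ℵ₀ ≤ lam * lam := mul_le_mul' le_rfl hlam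
        _ = lam := Cardinal.mul_eq_self hlam
    exact absurd hfin (not_le.2 (Order.lt_succ lam))
  let wemb := hc₀.natEmbedding
  refine ⟨c₀, fun k => (a ((wemb k) : {j | f (a j).1 berd = c₀})).1, ?_, ?_⟩
  · intro k l hEq
    by_contra hne
    have hvne : (((wemb k) : {j | f (a j).1 berd = c₀}) : (Order.succ lam).ord.ToType) ≠
        (((wemb l) : {j | f (a j).1 berd = c₀}) : (Order.succ lam).ord.ToType) := by
      intro h
      exact hne (wemb.injective (Subtype.ext h))
    rcases lt_trichotomy (((wemb k) : {j | f (a j).1 berd = c₀}) : (Order.succ lam).ord.ToType)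
      (((wemb l) : {j | f (a j).1 berd = c₀}) : (Order.succ lam).ord.ToType) with h | h | h
    · exact (ha _ _ h).1 hEq
    · exact hvne h
    · exact (ha _ _ h).1 hEq.symm
  · intro k l hkl
    have hvne : (((wemb k) : {j | f (a j).1 berd = c₀}) : (Order.succ lam).ord.ToType) ≠
        (((wemb l) : {j | f (a j).1 berd = c₀}) : (Order.succ lam).ord.ToType) := by
      intro h
      exact hkl (wemb.injective (Subtype.ext h))
    rcases lt_trichotomy (((wemb k) : {j | f (a j).1 berd = c₀}) : (Order.succ lam).ord.ToType)
      (((wemb l) : {j | f (a j).1 berd = c₀}) : (Order.succ lam).ord.ToType) with h | h | h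
    · left
      rw [(ha _ _ h).2]
      exact (wemb k).2
    · exact absurd h hvne
    · right
      rw [(ha _ _ h).2]
      exact (wemb l).2


end ER
/-- Observation 1.7(5) of [Sh:886]: if `H` is a subgroup of `G` of bounded index which is
type-definable over a tuple `ā` of length `α < κ̄`, then `(G : H) ≤ 2^{|T|+|α|}`. -/
theorem observation_h12_5
    {L : FirstOrder.Language.{u, u}} {M : Type u} [L.Structure M]
    (κbar : Cardinal.{u}) (hκinacc : κbar.IsInaccessible) (hκT : theoryCard L < κbar)
    (hκsat : Saturated L M κbar)
    (D : DefGroup L M) (hAκ : #(D.AStar) < κbar)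
    (α : Type u) (hα : #α < κbar) (abar : α → M)
    (r : Set (ParamFormula L M 1)) (hrover : IsTypeOver r (Set.range abar))
    (H : Set M) (hHr : H = realizeSet r)
    (hH : D.IsSubgroup H) (hidx : D.indexLT H κbar) :
    D.indexLE H (2 ^ (theoryCard L ⊔ #α)) := by
  classical
  by_contra hcon
  have hH' : D.IsSubgroup H := hH
  obtain ⟨S, hSsub, hScard, hScover⟩ := hidx
  have hlaminf : ℵ₀ ≤ theoryCard L ⊔ #α := le_sup_of_le_left le_sup_left
  -- a maximal set of pairwise H-inequivalent elements of G
  obtain ⟨T, hTmax⟩ := zorn_subset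
    {T : Set M | T ⊆ D.carrier ∧ ∀ x ∈ T, ∀ y ∈ T, x ≠ y → D.mul (D.inv x) y ∉ H}
    (by
      intro c hc hchain
      refine ⟨⋃₀ c, ⟨?_, ?_⟩, fun s hs => subset_sUnion_of_mem hs⟩
      · intro x hx
        obtain ⟨t, htc, hxt⟩ := hx
        exact (hc htc).1 hxt
      · intro x hx y hy hxy
        obtain ⟨t1, ht1, hx1⟩ := hx
        obtain ⟨t2, ht2, hy2⟩ := hy
        rcases hchain.total ht1 ht2 with h | h
        · exact (hc ht2).2 x (h hx1) y hy2 hxy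
        · exact (hc ht1).2 x hx1 y (h hy2) hxy)
  obtain ⟨⟨hTsub, hTpair⟩, hTmaximal⟩ := hTmax
  have hTcover : ∀ g ∈ D.carrier, ∃ s ∈ T, D.mul (D.inv s) g ∈ H := by
    intro g hg
    by_contra hno
    push_neg at hno
    have hgnotT : g ∉ T := fun hgT => hno g hgT (D.coset_refl hH' hg)
    have hins : insert g T ∈
        {T : Set M | T ⊆ D.carrier ∧ ∀ x ∈ T, ∀ y ∈ T, x ≠ y → D.mul (D.inv x) y ∉ H} := by
      constructor
      · exact Set.insert_subset hg hTsub
      · intro x hx y hy hxy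
        rcases Set.mem_insert_iff.1 hx with rfl | hxT
        · rcases Set.mem_insert_iff.1 hy with rfl | hyT
          · exact absurd rfl hxy
          · intro hmem
            exact hno y hyT (D.coset_symm hH' hg (hTsub hyT) hmem)
        · rcases Set.mem_insert_iff.1 hy with rfl | hyT
          · exact hno x hxT
          · exact hTpair x hxT y hyT hxy
    have hTT := hTmaximal hins (Set.subset_insert g T)
    exact hgnotT (hTT (Set.mem_insert g T))
  have hTbig : 2 ^ (theoryCard L ⊔ #α) < #T := by
    by_contra hle
    push_neg at hle
    exact hcon ⟨T, hTsub, hle, hTcover⟩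
  obtain ⟨mulφ, hmulP, hmulR⟩ := D.mul_definable
  obtain ⟨invφ, hinvP, hinvR⟩ := D.inv_definable
  have hrne : Nonempty ↥r := by
    have h1 : (1 : Cardinal) < #↥T := by
      refine lt_of_le_of_lt ?_ hTbig
      calc (1 : Cardinal) = 2 ^ (0 : Cardinal.{u}) := by rw [Cardinal.power_zero]
        _ ≤ 2 ^ (theoryCard L ⊔ #α) := by
            exact Cardinal.power_le_power_left (by norm_num) zero_le
    rw [Cardinal.one_lt_iff_nontrivial] at h1
    obtain ⟨x, y, hxy⟩ := h1
    have hxyv : (x : M) ≠ y := fun h => hxy (Subtype.ext h)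
    have hnotH := hTpair x x.2 y y.2 hxyv
    rw [hHr] at hnotH
    simp only [realizeSet, Set.mem_setOf_eq, not_forall] at hnotH
    obtain ⟨f, hf, _⟩ := hnotH
    exact ⟨⟨f, hf⟩⟩
  have hCcard : #(↥r) ≤ theoryCard L ⊔ #α := by
    have hsub : #(↥r) ≤ #{f : ParamFormula L M 1 // f.paramsIn (Set.range abar)} := by
      refine Cardinal.mk_le_of_injective (f := fun x => ⟨x.1, hrover x.1 x.2⟩) ?_
      intro f g h
      have h2 := congrArg Subtype.val h
      exact Subtype.ext h2
    refine hsub.trans ((card_paramFormula_le _).trans ?_)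
    exact sup_le_sup_left Cardinal.mk_range_le _
  -- the colouring
  let fcol : ↥T → ↥T → ↥r := fun x y =>
    if h : ∃ ψc : ↥r, ¬ (ψc.1.Realize fun _ => D.mul (D.inv x.1) y.1) then h.choose
    else Classical.arbitrary _
  have hfcol : ∀ x y : ↥T, x ≠ y →
      ¬ ((fcol x y).1.Realize fun _ => D.mul (D.inv x.1) y.1) := by
    intro x y hxy
    have hvne : (x : M) ≠ y := fun h => hxy (Subtype.ext h)
    have hnH := hTpair x x.2 y y.2 hvne
    rw [hHr] at hnH
    have hex : ∃ ψc : ↥r, ¬ (ψc.1.Realize fun _ => D.mul (D.inv x.1) y.1) := by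
      by_contra hno
      push_neg at hno
      exact hnH (fun f hf => hno ⟨f, hf⟩)
    simp only [fcol, dif_pos hex]
    exact hex.choose_spec
  have hTne : Nonempty ↥T := by
    rw [← Cardinal.mk_ne_zero_iff]
    intro h0
    rw [h0] at hTbig
    exact absurd hTbig (by simp)
  obtain ⟨ψ₀, w, hwinj, hwcol⟩ := erdos_rado_pairs hlaminf hCcard hTbig fcol
  let W : ℕ → M := fun k => ((w k : ↥T) : M)
  have hWT : ∀ k, W k ∈ T := fun k => (w k).2
  have hWG : ∀ k, W k ∈ D.carrier := fun k => hTsub (hWT k)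
  have hWpair : ∀ k l, k ≠ l →
      ¬ ((ψ₀.1.Realize fun _ => D.mul (D.inv (W k)) (W l)) ∧
         (ψ₀.1.Realize fun _ => D.mul (D.inv (W l)) (W k))) := by
    intro k l hkl hand
    rcases hwcol k l hkl with h | h
    · have hc := hfcol (w k) (w l) (fun he => hkl (hwinj he))
      rw [h] at hc
      exact hc hand.1
    · have hc := hfcol (w l) (w k) (fun he => hkl (hwinj he).symm)
      rw [h] at hc
      exact hc hand.2
  obtain ⟨mP, Θ, pv, hpvin, hΘ⟩ := exists_theta D invφ mulφ ψ₀.1 hinvR hmulR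
  have hpvB0 : ∀ i, pv i ∈ D.AStar ∪ (Set.range abar ∪ Set.range W) := by
    intro i
    rcases hpvin i with (h | h) | h
    · obtain ⟨j, hj⟩ := h; rw [← hj]; exact Or.inl (hinvP j)
    · obtain ⟨j, hj⟩ := h; rw [← hj]; exact Or.inl (hmulP j)
    · obtain ⟨j, hj⟩ := h; rw [← hj]; exact Or.inr (Or.inl (hrover ψ₀.1 ψ₀.2 j))
  have hℵκ : ℵ₀ < κbar := hκinacc.1
  have hB0card : #(D.AStar ∪ (Set.range abar ∪ Set.range W) : Set M) < κbar := by
    refine lt_of_le_of_lt (Cardinal.mk_union_le _ _) ?_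
    refine Cardinal.add_lt_of_lt hℵκ.le hAκ ?_
    refine lt_of_le_of_lt (Cardinal.mk_union_le _ _) ?_
    refine Cardinal.add_lt_of_lt hℵκ.le ?_ ?_
    · exact lt_of_le_of_lt Cardinal.mk_range_le hα
    · calc #(Set.range W) ≤ ℵ₀ := Cardinal.mk_le_aleph0_iff.2 (Set.countable_range W).to_subtype
        _ < κbar := hℵκ
  have hwfS : WellFounded ((· < ·) : (Order.succ #↥S).ord.ToType →
      (Order.succ #↥S).ord.ToType → Prop) := IsWellFounded.wf
  obtain ⟨bfun, hbfun⟩ := exists_rec_fn (N := M) hwfS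
    (fun i prior x => ∀ f : ParamFormula L M 1,
      f.paramsIn ((D.AStar ∪ (Set.range abar ∪ Set.range W)) ∪
        Set.range (fun jp : {j // j < i} => prior jp.1 jp.2)) →
      {k | f.Realize fun _ => W k} ∈ Filter.hyperfilter ℕ → (f.Realize fun _ => x))
    (by
      intro i prior
      have hBcard : #(((D.AStar ∪ (Set.range abar ∪ Set.range W)) ∪
          Set.range (fun jp : {j // j < i} => prior jp.1 jp.2)) : Set M) < κbar := by
        refine lt_of_le_of_lt (Cardinal.mk_union_le _ _) ?_
        refine Cardinal.add_lt_of_lt hℵκ.le hB0card ?_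
        refine lt_of_le_of_lt Cardinal.mk_range_le ?_
        have hEq : #{j // j < i} = #(Set.Iio i) :=
          Cardinal.mk_congr (Equiv.subtypeEquivRight fun _ => Iff.rfl)
        have h1 : #(Set.Iio i) < Order.succ #↥S := Cardinal.mk_Iio_ord_toType i
        rw [hEq]
        exact lt_of_le_of_lt (Order.lt_succ_iff.1 h1) hScard
      obtain ⟨x, hx⟩ := hκsat _ hBcard
        {f : ParamFormula L M 1 | f.paramsIn ((D.AStar ∪ (Set.range abar ∪ Set.range W)) ∪
            Set.range (fun jp : {j // j < i} => prior jp.1 jp.2)) ∧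
          {k | f.Realize fun _ => W k} ∈ Filter.hyperfilter ℕ}
        (fun f hf => hf.1)
        (by
          intro s hs hsfin
          have hinter : (⋂ f ∈ s, {k | f.Realize fun _ => W k}) ∈ Filter.hyperfilter ℕ := by
            refine (Filter.biInter_mem hsfin).2 ?_
            intro f hf
            exact (hs hf).2
          obtain ⟨k, hk⟩ := Ultrafilter.nonempty_of_mem hinter
          refine ⟨W k, fun f hf => ?_⟩
          simp only [Set.mem_iInter] at hk
          exact hk f hf)
      exact ⟨x, fun f h1 h2 => hx f ⟨h1, h2⟩⟩)
  have hbG : ∀ i, bfun i ∈ D.carrier := by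
    intro i
    intro χ hχ
    refine hbfun i χ (fun j => Or.inl (Or.inl (D.pStar_over χ hχ j))) ?_
    refine Filter.mem_of_superset Filter.univ_mem ?_
    intro k _
    exact hWG k χ hχ
  have hbnotW : ∀ i k, ¬ ((ψ₀.1.Realize fun _ => D.mul (D.inv (bfun i)) (W k)) ∧
      (ψ₀.1.Realize fun _ => D.mul (D.inv (W k)) (bfun i))) := by
    intro i k
    obtain ⟨θk, hθkP, hθkR⟩ := exists_fix_snd Θ pv (W k)
    have hparams : θk.pnot.paramsIn ((D.AStar ∪ (Set.range abar ∪ Set.range W)) ∪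
        Set.range (fun jp : {j // j < i} => bfun jp.1)) := by
      intro j
      show θk.params j ∈ _
      rcases Set.mem_insert_iff.1 (hθkP j) with h | h
      · rw [h]
        exact Or.inl (Or.inr (Or.inr ⟨k, rfl⟩))
      · obtain ⟨j', hj'⟩ := h
        rw [← hj']
        exact Or.inl (hpvB0 j')
    have hU : {k' | θk.pnot.Realize fun _ => W k'} ∈ Filter.hyperfilter ℕ := by
      refine Filter.mem_of_superset
        (Filter.compl_mem_hyperfilter_of_finite (Set.finite_singleton k)) ?_
      intro k' hk'
      have hkk' : k' ≠ k := by simpa using hk'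
      show θk.pnot.Realize fun _ => W k'
      rw [ParamFormula.realize_pnot, hθkR (W k'), hΘ (W k') (W k)]
      exact hWpair k' k hkk'
    have hres := hbfun i θk.pnot hparams hU
    rw [ParamFormula.realize_pnot, hθkR (bfun i), hΘ (bfun i) (W k)] at hres
    exact hres
  have hbpair : ∀ i j, j < i → D.mul (D.inv (bfun j)) (bfun i) ∉ H := by
    intro i j hj
    obtain ⟨θj, hθjP, hθjR⟩ := exists_fix_fst Θ pv (bfun j)
    have hparams : θj.pnot.paramsIn ((D.AStar ∪ (Set.range abar ∪ Set.range W)) ∪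
        Set.range (fun jp : {j' // j' < i} => bfun jp.1)) := by
      intro t
      show θj.params t ∈ _
      rcases Set.mem_insert_iff.1 (hθjP t) with h | h
      · rw [h]
        exact Or.inr ⟨⟨j, hj⟩, rfl⟩
      · obtain ⟨j', hj'⟩ := h
        rw [← hj']
        exact Or.inl (hpvB0 j')
    have hU : {k' | θj.pnot.Realize fun _ => W k'} ∈ Filter.hyperfilter ℕ := by
      refine Filter.mem_of_superset Filter.univ_mem ?_
      intro k' _
      show θj.pnot.Realize fun _ => W k'
      rw [ParamFormula.realize_pnot, hθjR (W k'), hΘ (bfun j) (W k')]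
      exact hbnotW j k'
    have hres := hbfun i θj.pnot hparams hU
    rw [ParamFormula.realize_pnot, hθjR (bfun i), hΘ (bfun j) (bfun i)] at hres
    intro hmemH
    apply hres
    have hmem2 : D.mul (D.inv (bfun i)) (bfun j) ∈ H :=
      D.coset_symm hH' (hbG j) (hbG i) hmemH
    constructor
    · rw [hHr] at hmemH; exact hmemH ψ₀.1 ψ₀.2
    · rw [hHr] at hmem2; exact hmem2 ψ₀.1 ψ₀.2
  have hrep : ∀ i : (Order.succ #↥S).ord.ToType, ∃ s ∈ S, D.mul (D.inv s) (bfun i) ∈ H :=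
    fun i => hScover (bfun i) (hbG i)
  choose srep hsrepS hsrepH using hrep
  have hinj : Function.Injective (fun i => (⟨srep i, hsrepS i⟩ : ↥S)) := by
    intro i j hij
    by_contra hne
    have hvq : srep i = srep j := congrArg Subtype.val hij
    rcases lt_trichotomy i j with h | h | h
    · refine hbpair j i h ?_
      refine D.coset_trans hH' (hSsub (hsrepS i)) (hbG i) (hbG j) (hsrepH i) ?_
      rw [hvq]; exact hsrepH j
    · exact hne h
    · refine hbpair i j h ?_
      refine D.coset_trans hH' (hSsub (hsrepS j)) (hbG j) (hbG i) (hsrepH j) ?_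
      rw [← hvq]; exact hsrepH i
  have hcard := Cardinal.mk_le_of_injective hinj
  rw [Cardinal.mk_toType, Cardinal.card_ord] at hcard
  exact absurd hcard (not_le.2 (Order.lt_succ _))

end Paper886
end
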